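/- arXiv:2306.12575 — 5 statements merged into one kernel-verified Lean document; each statement's English description precedes it below -/
import Mathlib

section
/- Let $T$ be a caterpillar whose spine (vertices of degree at least 2) has exactly $p = 3$ vertices, where only the two end spine vertices have leaves, with $\ell$ and $t$ leaves respectively, $\ell \geq t \geq 1$, and $n = \ell + t + 3$ vertices total. If the firefighter is restricted to defending only once (e.g., distance $d \leq 2$ or path-restrictions), then the total number of burnt vertices summed over all starting vertices is at least $2(n-3) + 4 + t = 2n - 2 + t$, hence the expected damage is strictly greater than $2 - 2/n$. -/
open SimpleGraph Finset
open scoped Classical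

namespace FF

variable {V : Type*} [Fintype V] [DecidableEq V]

/-- One step of fire spread: the fire spreads to every undefended neighbour of a burnt vertex. -/
noncomputable def spread (G : SimpleGraph V) (D B : Finset V) : Finset V :=
  B ∪ Finset.univ.filter (fun v => v ∉ D ∧ ∃ u ∈ B, G.Adj u v)

/-- Cumulative defended set of a classic strategy. -/
noncomputable def cumDef (σ : ℕ → Finset V) (t : ℕ) : Finset V :=
  (Finset.range (t + 1)).biUnion σ

/-- Burnt set at time `t` in the classic game. -/
noncomputable def burnt (G : SimpleGraph V) (F : Finset V) (σ : ℕ → Finset V) : ℕ → Finset V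
  | 0 => F
  | t + 1 => spread G (cumDef σ t) (burnt G F σ t)

/-- A classic strategy is valid for `b` firefighters. -/
def ValidClassic (G : SimpleGraph V) (F : Finset V) (b : ℕ) (σ : ℕ → Finset V) : Prop :=
  ∀ t, (σ t).card ≤ b ∧ ∀ v ∈ σ t, v ∉ burnt G F σ t

/-- Final burnt set (the process stabilizes after `|V|` steps). -/
noncomputable def finalBurnt (G : SimpleGraph V) (F : Finset V) (σ : ℕ → Finset V) : Finset V :=
  burnt G F σ (Fintype.card V)

/-- Maximum number of vertices saved in the classic game. -/
noncomputable def MVS (G : SimpleGraph V) (F : Finset V) (b : ℕ) : ℕ :=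
  sSup {k | ∃ σ : ℕ → Finset V, ValidClassic G F b σ ∧
    k = Fintype.card V - (finalBurnt G F σ).card}

/-- Defended set induced by firefighter positions up to time `t`. -/
noncomputable def posDef {b : ℕ} (p : ℕ → Fin b → V) (t : ℕ) : Finset V :=
  (Finset.range (t + 1)).biUnion (fun τ => Finset.univ.image (p τ))

/-- Burnt set at time `t` in the position-based games. -/
noncomputable def pburnt (G : SimpleGraph V) (F : Finset V) {b : ℕ}
    (p : ℕ → Fin b → V) : ℕ → Finset V
  | 0 => F
  | t + 1 => spread G (posDef p t) (pburnt G F p t)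

/-- Validity for the distance-restricted game: firefighters never occupy a burnt
vertex and move graph distance at most `d` each turn. -/
def ValidDR (G : SimpleGraph V) (F : Finset V) (d : ℕ) {b : ℕ} (p : ℕ → Fin b → V) : Prop :=
  (∀ t i, p t i ∉ pburnt G F p t) ∧ ∀ t i, G.dist (p t i) (p (t + 1) i) ≤ d

/-- Distance-restricted maximum vertices saved. -/
noncomputable def DRMVS (G : SimpleGraph V) (F : Finset V) (b d : ℕ) : ℕ :=
  sSup {k | ∃ p : ℕ → Fin b → V, ValidDR G F d p ∧
    k = Fintype.card V - (pburnt G F p (Fintype.card V)).card}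

/-- Validity for the path-restricted game with unlimited distance: firefighters
move along walks of unburnt vertices. -/
def ValidPR (G : SimpleGraph V) (F : Finset V) {b : ℕ} (p : ℕ → Fin b → V) : Prop :=
  (∀ t i, p t i ∉ pburnt G F p t) ∧
    ∀ t i, ∃ w : G.Walk (p t i) (p (t + 1) i),
      ∀ v ∈ w.support, v ∉ pburnt G F p (t + 1)

/-- Path-restricted (unlimited distance) maximum vertices saved. -/
noncomputable def PRMVS (G : SimpleGraph V) (F : Finset V) (b : ℕ) : ℕ :=
  sSup {k | ∃ p : ℕ → Fin b → V, ValidPR G F p ∧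
    k = Fintype.card V - (pburnt G F p (Fintype.card V)).card}

/-- Validity for the distance- and path-restricted game. -/
def ValidDPR (G : SimpleGraph V) (F : Finset V) (d : ℕ) {b : ℕ} (p : ℕ → Fin b → V) : Prop :=
  (∀ t i, p t i ∉ pburnt G F p t) ∧
    ∀ t i, ∃ w : G.Walk (p t i) (p (t + 1) i), w.length ≤ d ∧
      ∀ v ∈ w.support, v ∉ pburnt G F p (t + 1)

/-- Distance- and path-restricted maximum vertices saved. -/
noncomputable def DPRMVS (G : SimpleGraph V) (F : Finset V) (b d : ℕ) : ℕ :=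
  sSup {k | ∃ p : ℕ → Fin b → V, ValidDPR G F d p ∧
    k = Fintype.card V - (pburnt G F p (Fintype.card V)).card}

/-- Burnt count in the single-defence game: the firefighter defends a single
vertex `w ≠ s` and the fire then burns everything reachable from `s` avoiding `w`. -/
noncomputable def sdBurnt (G : SimpleGraph V) (s : V) : ℕ :=
  sInf {k | ∃ w, w ≠ s ∧
    k = (Finset.univ.filter (fun x => ∃ q : G.Walk s x, w ∉ q.support)).card}

end FF

open FF

/-- One-directional edge description of the caterpillar with spine `0 - 1 - 2`,
`ℓ` leaves on spine vertex `0` (namely `3,…,ℓ+2`) and `t` leaves on spine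
vertex `2` (namely `ℓ+3,…,ℓ+t+2`). -/
def catLink (ℓ : ℕ) {n : ℕ} (a b : Fin n) : Prop :=
  ((a : ℕ) = 0 ∧ (b : ℕ) = 1) ∨ ((a : ℕ) = 1 ∧ (b : ℕ) = 2) ∨
  ((a : ℕ) = 0 ∧ 3 ≤ (b : ℕ) ∧ (b : ℕ) < ℓ + 3) ∨
  ((a : ℕ) = 2 ∧ ℓ + 3 ≤ (b : ℕ))

/-- The caterpillar with three spine vertices, `ℓ` leaves on one spine end and
`t` leaves on the other, on `n = ℓ + t + 3` vertices. -/
def catG (ℓ t : ℕ) : SimpleGraph (Fin (ℓ + t + 3)) where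
  Adj a b := catLink ℓ a b ∨ catLink ℓ b a
  symm := ⟨fun a b h => h.symm⟩
  loopless := by
    constructor
    intro a h
    rcases h with h | h <;> rcases h with h | h | h | h <;> omega

namespace CatAux

open SimpleGraph Finset
open scoped Classical

variable {ℓ t : ℕ}

def v0 : Fin (ℓ + t + 3) := ⟨0, by omega⟩
def v1 : Fin (ℓ + t + 3) := ⟨1, by omega⟩
def v2 : Fin (ℓ + t + 3) := ⟨2, by omega⟩

lemma v0_val : (v0 : Fin (ℓ + t + 3)).val = 0 := rfl
lemma v1_val : (v1 : Fin (ℓ + t + 3)).val = 1 := rfl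
lemma v2_val : (v2 : Fin (ℓ + t + 3)).val = 2 := rfl

lemma e01 : (v0 : Fin (ℓ + t + 3)) ≠ v1 := by
  intro h; have := congrArg Fin.val h; rw [v0_val, v1_val] at this; omega
lemma e02 : (v0 : Fin (ℓ + t + 3)) ≠ v2 := by
  intro h; have := congrArg Fin.val h; rw [v0_val, v2_val] at this; omega
lemma e12 : (v1 : Fin (ℓ + t + 3)) ≠ v2 := by
  intro h; have := congrArg Fin.val h; rw [v1_val, v2_val] at this; omega

lemma adj01 : (catG ℓ t).Adj v0 v1 := Or.inl (Or.inl ⟨rfl, rfl⟩)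
lemma adj12 : (catG ℓ t).Adj v1 v2 := Or.inl (Or.inr (Or.inl ⟨rfl, rfl⟩))
lemma adj0l {x : Fin (ℓ + t + 3)} (h3 : 3 ≤ x.val) (hx : x.val < ℓ + 3) :
    (catG ℓ t).Adj v0 x := Or.inl (Or.inr (Or.inr (Or.inl ⟨rfl, h3, hx⟩)))
lemma adj2l {x : Fin (ℓ + t + 3)} (h : ℓ + 3 ≤ x.val) :
    (catG ℓ t).Adj v2 x := Or.inl (Or.inr (Or.inr (Or.inr ⟨rfl, h⟩)))

lemma sdBurnt_ge {V : Type*} [Fintype V] [DecidableEq V] (G : SimpleGraph V) (s : V) (m : ℕ)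
    (hne : ∃ w, w ≠ s)
    (h : ∀ w, w ≠ s →
      m ≤ (Finset.univ.filter (fun x => ∃ q : G.Walk s x, w ∉ q.support)).card) :
    m ≤ FF.sdBurnt G s := by
  apply le_csInf
  · obtain ⟨w, hw⟩ := hne; exact ⟨_, w, hw, rfl⟩
  · rintro k ⟨w, hw, rfl⟩; exact h w hw

/-- leaves of spine vertex 0 -/
noncomputable def L0 (ℓ t : ℕ) : Finset (Fin (ℓ + t + 3)) :=
  Finset.univ.filter (fun x => 3 ≤ x.val ∧ x.val < ℓ + 3)

/-- leaves of spine vertex 2 -/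
noncomputable def L2 (ℓ t : ℕ) : Finset (Fin (ℓ + t + 3)) :=
  Finset.univ.filter (fun x => ℓ + 3 ≤ x.val)

lemma mem_L0 {x : Fin (ℓ + t + 3)} : x ∈ L0 ℓ t ↔ 3 ≤ x.val ∧ x.val < ℓ + 3 := by
  simp [L0]

lemma mem_L2 {x : Fin (ℓ + t + 3)} : x ∈ L2 ℓ t ↔ ℓ + 3 ≤ x.val := by
  simp [L2]

lemma card_L0 : (L0 ℓ t).card = ℓ := by
  have h : (L0 ℓ t).card = (Finset.Ico 3 (ℓ + 3)).card := by
    apply Finset.card_nbij' (fun x : Fin (ℓ + t + 3) => (x.val : ℕ))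
      (fun y => (⟨y % (ℓ + t + 3), Nat.mod_lt _ (by omega)⟩ : Fin (ℓ + t + 3)))
    · intro a ha
      rw [Finset.mem_coe, mem_L0] at ha
      rw [Finset.mem_coe, Finset.mem_Ico]; omega
    · intro b hb
      rw [Finset.mem_coe, Finset.mem_Ico] at hb
      rw [Finset.mem_coe, mem_L0]
      have hb' : b % (ℓ + t + 3) = b := Nat.mod_eq_of_lt (by omega)
      show 3 ≤ b % (ℓ + t + 3) ∧ b % (ℓ + t + 3) < ℓ + 3
      omega
    · intro a _; exact Fin.ext (Nat.mod_eq_of_lt a.isLt)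
    · intro b hb
      rw [Finset.mem_coe, Finset.mem_Ico] at hb
      show b % (ℓ + t + 3) = b
      exact Nat.mod_eq_of_lt (by omega)
  rw [h, Nat.card_Ico]; omega

lemma card_L2 : (L2 ℓ t).card = t := by
  have h : (L2 ℓ t).card = (Finset.Ico (ℓ + 3) (ℓ + t + 3)).card := by
    apply Finset.card_nbij' (fun x : Fin (ℓ + t + 3) => (x.val : ℕ))
      (fun y => (⟨y % (ℓ + t + 3), Nat.mod_lt _ (by omega)⟩ : Fin (ℓ + t + 3)))
    · intro a ha
      rw [Finset.mem_coe, mem_L2] at ha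
      rw [Finset.mem_coe, Finset.mem_Ico]
      exact ⟨ha, a.isLt⟩
    · intro b hb
      rw [Finset.mem_coe, Finset.mem_Ico] at hb
      rw [Finset.mem_coe, mem_L2]
      show ℓ + 3 ≤ b % (ℓ + t + 3)
      have hb' : b % (ℓ + t + 3) = b := Nat.mod_eq_of_lt (by omega)
      omega
    · intro a _; exact Fin.ext (Nat.mod_eq_of_lt a.isLt)
    · intro b hb
      rw [Finset.mem_coe, Finset.mem_Ico] at hb
      show b % (ℓ + t + 3) = b
      exact Nat.mod_eq_of_lt (by omega)
  rw [h, Nat.card_Ico]; omega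

end CatAux


open CatAux

theorem stmt2 (ℓ t : ℕ) (ht : 1 ≤ t) (htℓ : t ≤ ℓ) :
    2 * (ℓ + t + 3) - 2 + t ≤ ∑ s : Fin (ℓ + t + 3), FF.sdBurnt (catG ℓ t) s ∧
    2 - 2 / ((ℓ + t + 3 : ℕ) : ℚ) <
      (∑ s : Fin (ℓ + t + 3), (FF.sdBurnt (catG ℓ t) s : ℚ)) / ((ℓ + t + 3 : ℕ) : ℚ) := by
  have memR : ∀ (s w x : Fin (ℓ + t + 3)),
      (∃ q : (catG ℓ t).Walk s x, w ∉ q.support) →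
      x ∈ Finset.univ.filter (fun x => ∃ q : (catG ℓ t).Walk s x, w ∉ q.support) :=
    fun s w x h => Finset.mem_filter.2 ⟨Finset.mem_univ _, h⟩
  -- vertex 0 burns at least ℓ + 1
  have b0 : ℓ + 1 ≤ FF.sdBurnt (catG ℓ t) v0 := by
    apply sdBurnt_ge _ _ _ ⟨v1, e01.symm⟩
    intro w hw
    have hsub : (insert v0 (insert v1 (L0 ℓ t))).erase w ⊆
        Finset.univ.filter (fun x => ∃ q : (catG ℓ t).Walk v0 x, w ∉ q.support) := by
      intro x hx
      rw [Finset.mem_erase] at hx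
      obtain ⟨hxw, hx⟩ := hx
      rcases Finset.mem_insert.1 hx with rfl | hx
      · exact memR _ _ _ ⟨SimpleGraph.Walk.nil, by
          simp only [SimpleGraph.Walk.support_nil, List.mem_singleton]
          exact fun h => hxw h.symm⟩
      rcases Finset.mem_insert.1 hx with rfl | hx
      · refine memR _ _ _ ⟨SimpleGraph.Walk.cons adj01 SimpleGraph.Walk.nil, ?_⟩
        simp only [SimpleGraph.Walk.support_cons, SimpleGraph.Walk.support_nil,
          List.mem_cons, List.mem_singleton, List.not_mem_nil, or_false]
        rintro (h | h)
        · exact hw h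
        · exact hxw h.symm
      · have hx' := (mem_L0.1 hx)
        refine memR _ _ _ ⟨SimpleGraph.Walk.cons (adj0l hx'.1 hx'.2) SimpleGraph.Walk.nil, ?_⟩
        simp only [SimpleGraph.Walk.support_cons, SimpleGraph.Walk.support_nil,
          List.mem_cons, List.mem_singleton, List.not_mem_nil, or_false]
        rintro (h | h)
        · exact hw h
        · exact hxw h.symm
    have h1 : (v1 : Fin (ℓ + t + 3)) ∉ L0 ℓ t := by
      rw [mem_L0, v1_val]; omega
    have h0 : (v0 : Fin (ℓ + t + 3)) ∉ insert v1 (L0 ℓ t) := by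
      intro h
      rcases Finset.mem_insert.1 h with h | h
      · exact e01 h
      · rw [mem_L0, v0_val] at h; omega
    have hc : (insert v0 (insert v1 (L0 ℓ t))).card = ℓ + 2 := by
      rw [Finset.card_insert_of_notMem h0, Finset.card_insert_of_notMem h1, card_L0]
    have he := Finset.pred_card_le_card_erase
      (s := insert v0 (insert v1 (L0 ℓ t))) (a := w)
    have := Finset.card_le_card hsub
    omega
  -- vertex 2 burns at least t + 1
  have b2 : t + 1 ≤ FF.sdBurnt (catG ℓ t) v2 := by
    apply sdBurnt_ge _ _ _ ⟨v1, e12⟩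
    intro w hw
    have hsub : (insert v2 (insert v1 (L2 ℓ t))).erase w ⊆
        Finset.univ.filter (fun x => ∃ q : (catG ℓ t).Walk v2 x, w ∉ q.support) := by
      intro x hx
      rw [Finset.mem_erase] at hx
      obtain ⟨hxw, hx⟩ := hx
      rcases Finset.mem_insert.1 hx with rfl | hx
      · exact memR _ _ _ ⟨SimpleGraph.Walk.nil, by
          simp only [SimpleGraph.Walk.support_nil, List.mem_singleton]
          exact fun h => hxw h.symm⟩
      rcases Finset.mem_insert.1 hx with rfl | hx
      · refine memR _ _ _ ⟨SimpleGraph.Walk.cons adj12.symm SimpleGraph.Walk.nil, ?_⟩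
        simp only [SimpleGraph.Walk.support_cons, SimpleGraph.Walk.support_nil,
          List.mem_cons, List.mem_singleton, List.not_mem_nil, or_false]
        rintro (h | h)
        · exact hw h
        · exact hxw h.symm
      · have hx' := mem_L2.1 hx
        refine memR _ _ _ ⟨SimpleGraph.Walk.cons (adj2l hx') SimpleGraph.Walk.nil, ?_⟩
        simp only [SimpleGraph.Walk.support_cons, SimpleGraph.Walk.support_nil,
          List.mem_cons, List.mem_singleton, List.not_mem_nil, or_false]
        rintro (h | h)
        · exact hw h
        · exact hxw h.symm
    have h1 : (v1 : Fin (ℓ + t + 3)) ∉ L2 ℓ t := by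
      rw [mem_L2, v1_val]; omega
    have h2 : (v2 : Fin (ℓ + t + 3)) ∉ insert v1 (L2 ℓ t) := by
      intro h
      rcases Finset.mem_insert.1 h with h | h
      · exact e12.symm h
      · rw [mem_L2, v2_val] at h; omega
    have hc : (insert v2 (insert v1 (L2 ℓ t))).card = t + 2 := by
      rw [Finset.card_insert_of_notMem h2, Finset.card_insert_of_notMem h1, card_L2]
    have he := Finset.pred_card_le_card_erase
      (s := insert v2 (insert v1 (L2 ℓ t))) (a := w)
    have := Finset.card_le_card hsub
    omega
  -- vertex 1 burns at least t + 2
  have b1 : t + 2 ≤ FF.sdBurnt (catG ℓ t) v1 := by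
    apply sdBurnt_ge _ _ _ ⟨v0, e01⟩
    intro w hw
    by_cases hw2 : w = v2
    · have hsub : insert v1 (insert v0 (L0 ℓ t)) ⊆
          Finset.univ.filter (fun x => ∃ q : (catG ℓ t).Walk v1 x, w ∉ q.support) := by
        intro x hx
        rcases Finset.mem_insert.1 hx with rfl | hx
        · exact memR _ _ _ ⟨SimpleGraph.Walk.nil, by
            simp only [SimpleGraph.Walk.support_nil, List.mem_singleton]
            exact hw⟩
        rcases Finset.mem_insert.1 hx with rfl | hx
        · refine memR _ _ _ ⟨SimpleGraph.Walk.cons adj01.symm SimpleGraph.Walk.nil, ?_⟩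
          simp only [SimpleGraph.Walk.support_cons, SimpleGraph.Walk.support_nil,
            List.mem_cons, List.mem_singleton, List.not_mem_nil, or_false]
          rintro (h | h)
          · exact hw h
          · exact e02.symm (hw2.symm.trans h)
        · have hx' := mem_L0.1 hx
          refine memR _ _ _ ⟨SimpleGraph.Walk.cons adj01.symm
            (SimpleGraph.Walk.cons (adj0l hx'.1 hx'.2) SimpleGraph.Walk.nil), ?_⟩
          simp only [SimpleGraph.Walk.support_cons, SimpleGraph.Walk.support_nil,
            List.mem_cons, List.mem_singleton, List.not_mem_nil, or_false]
          rintro (h | h | h)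
          · exact hw h
          · exact e02.symm (hw2.symm.trans h)
          · have h2x := congrArg Fin.val (hw2.symm.trans h)
            rw [v2_val] at h2x
            omega
      have h0 : (v0 : Fin (ℓ + t + 3)) ∉ L0 ℓ t := by
        rw [mem_L0, v0_val]; omega
      have h1 : (v1 : Fin (ℓ + t + 3)) ∉ insert v0 (L0 ℓ t) := by
        intro h
        rcases Finset.mem_insert.1 h with h | h
        · exact e01 h.symm
        · rw [mem_L0, v1_val] at h; omega
      have hc : (insert v1 (insert v0 (L0 ℓ t))).card = ℓ + 2 := by
        rw [Finset.card_insert_of_notMem h1, Finset.card_insert_of_notMem h0, card_L0]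
      have := Finset.card_le_card hsub
      omega
    · have hsub : (insert v1 (insert v0 (insert v2 (L2 ℓ t)))).erase w ⊆
          Finset.univ.filter (fun x => ∃ q : (catG ℓ t).Walk v1 x, w ∉ q.support) := by
        intro x hx
        rw [Finset.mem_erase] at hx
        obtain ⟨hxw, hx⟩ := hx
        rcases Finset.mem_insert.1 hx with rfl | hx
        · exact memR _ _ _ ⟨SimpleGraph.Walk.nil, by
            simp only [SimpleGraph.Walk.support_nil, List.mem_singleton]
            exact fun h => hxw h.symm⟩
        rcases Finset.mem_insert.1 hx with rfl | hx
        · refine memR _ _ _ ⟨SimpleGraph.Walk.cons adj01.symm SimpleGraph.Walk.nil, ?_⟩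
          simp only [SimpleGraph.Walk.support_cons, SimpleGraph.Walk.support_nil,
            List.mem_cons, List.mem_singleton, List.not_mem_nil, or_false]
          rintro (h | h)
          · exact hw h
          · exact hxw h.symm
        rcases Finset.mem_insert.1 hx with rfl | hx
        · refine memR _ _ _ ⟨SimpleGraph.Walk.cons adj12 SimpleGraph.Walk.nil, ?_⟩
          simp only [SimpleGraph.Walk.support_cons, SimpleGraph.Walk.support_nil,
            List.mem_cons, List.mem_singleton, List.not_mem_nil, or_false]
          rintro (h | h)
          · exact hw h
          · exact hxw h.symm
        · have hx' := mem_L2.1 hx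
          refine memR _ _ _ ⟨SimpleGraph.Walk.cons adj12
            (SimpleGraph.Walk.cons (adj2l hx') SimpleGraph.Walk.nil), ?_⟩
          simp only [SimpleGraph.Walk.support_cons, SimpleGraph.Walk.support_nil,
            List.mem_cons, List.mem_singleton, List.not_mem_nil, or_false]
          rintro (h | h | h)
          · exact hw h
          · exact hw2 h
          · exact hxw h.symm
      have h2 : (v2 : Fin (ℓ + t + 3)) ∉ L2 ℓ t := by
        rw [mem_L2, v2_val]; omega
      have h0 : (v0 : Fin (ℓ + t + 3)) ∉ insert v2 (L2 ℓ t) := by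
        intro h
        rcases Finset.mem_insert.1 h with h | h
        · exact e02 h
        · rw [mem_L2, v0_val] at h; omega
      have h1 : (v1 : Fin (ℓ + t + 3)) ∉ insert v0 (insert v2 (L2 ℓ t)) := by
        intro h
        rcases Finset.mem_insert.1 h with h | h
        · exact e01 h.symm
        rcases Finset.mem_insert.1 h with h | h
        · exact e12 h
        · rw [mem_L2, v1_val] at h; omega
      have hc : (insert v1 (insert v0 (insert v2 (L2 ℓ t)))).card = t + 3 := by
        rw [Finset.card_insert_of_notMem h1, Finset.card_insert_of_notMem h0,
          Finset.card_insert_of_notMem h2, card_L2]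
      have he := Finset.pred_card_le_card_erase
        (s := insert v1 (insert v0 (insert v2 (L2 ℓ t)))) (a := w)
      have := Finset.card_le_card hsub
      omega
  -- every vertex burns at least itself
  have ball : ∀ s : Fin (ℓ + t + 3), 1 ≤ FF.sdBurnt (catG ℓ t) s := by
    intro s
    have hne : ∃ w : Fin (ℓ + t + 3), w ≠ s := by
      by_cases hs : s = v0
      · exact ⟨v1, by rw [hs]; exact e01.symm⟩
      · exact ⟨v0, fun h => hs h.symm⟩
    apply sdBurnt_ge _ _ _ hne
    intro w hw
    have hmem : s ∈ Finset.univ.filter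
        (fun x => ∃ q : (catG ℓ t).Walk s x, w ∉ q.support) :=
      memR _ _ _ ⟨SimpleGraph.Walk.nil, by
        simp only [SimpleGraph.Walk.support_nil, List.mem_singleton]; exact hw⟩
    exact Finset.card_pos.2 ⟨s, hmem⟩
  -- sum up
  have hA1 : (v1 : Fin (ℓ + t + 3)) ∉ ({v2} : Finset (Fin (ℓ + t + 3))) := by
    simpa using e12
  have hA0 : (v0 : Fin (ℓ + t + 3)) ∉ ({v1, v2} : Finset (Fin (ℓ + t + 3))) := by
    simp only [Finset.mem_insert, Finset.mem_singleton]
    rintro (h | h)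
    · exact e01 h
    · exact e02 h
  have hAcard : ({v0, v1, v2} : Finset (Fin (ℓ + t + 3))).card = 3 := by
    rw [Finset.card_insert_of_notMem hA0, Finset.card_insert_of_notMem hA1,
      Finset.card_singleton]
  have hsplit : ∑ s ∈ Finset.univ \ ({v0, v1, v2} : Finset (Fin (ℓ + t + 3))),
        FF.sdBurnt (catG ℓ t) s
      + ∑ s ∈ ({v0, v1, v2} : Finset (Fin (ℓ + t + 3))), FF.sdBurnt (catG ℓ t) s
      = ∑ s : Fin (ℓ + t + 3), FF.sdBurnt (catG ℓ t) s :=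
    Finset.sum_sdiff (Finset.subset_univ _)
  have hAsum : ∑ s ∈ ({v0, v1, v2} : Finset (Fin (ℓ + t + 3))), FF.sdBurnt (catG ℓ t) s
      = FF.sdBurnt (catG ℓ t) v0 + (FF.sdBurnt (catG ℓ t) v1 + FF.sdBurnt (catG ℓ t) v2) := by
    rw [Finset.sum_insert hA0, Finset.sum_insert hA1, Finset.sum_singleton]
  have hrest : (Finset.univ \ ({v0, v1, v2} : Finset (Fin (ℓ + t + 3)))).card ≤
      ∑ s ∈ Finset.univ \ ({v0, v1, v2} : Finset (Fin (ℓ + t + 3))), FF.sdBurnt (catG ℓ t) s := by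
    have := Finset.card_nsmul_le_sum
      (Finset.univ \ ({v0, v1, v2} : Finset (Fin (ℓ + t + 3))))
      (fun s => FF.sdBurnt (catG ℓ t) s) 1 (fun s _ => ball s)
    simpa using this
  have hcards : (Finset.univ \ ({v0, v1, v2} : Finset (Fin (ℓ + t + 3)))).card = ℓ + t := by
    rw [Finset.card_sdiff_of_subset (Finset.subset_univ _), hAcard, Finset.card_univ,
      Fintype.card_fin]
    omega
  have hsum : 2 * (ℓ + t + 3) - 2 + t ≤ ∑ s : Fin (ℓ + t + 3), FF.sdBurnt (catG ℓ t) s := by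
    omega
  refine ⟨hsum, ?_⟩
  have hsum' : 2 * ℓ + 3 * t + 4 ≤ ∑ s : Fin (ℓ + t + 3), FF.sdBurnt (catG ℓ t) s := by omega
  have hn : (0 : ℚ) < ((ℓ + t + 3 : ℕ) : ℚ) := by
    exact_mod_cast Nat.pos_of_ne_zero (by omega)
  rw [lt_div_iff₀ hn]
  have h1 : (2 * (ℓ : ℚ) + 3 * t + 4 : ℚ) ≤ ∑ s : Fin (ℓ + t + 3),
      (FF.sdBurnt (catG ℓ t) s : ℚ) := by exact_mod_cast hsum'
  have ht' : (1 : ℚ) ≤ (t : ℚ) := by exact_mod_cast ht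
  have hexp : (2 - 2 / ((ℓ + t + 3 : ℕ) : ℚ)) * ((ℓ + t + 3 : ℕ) : ℚ)
      = 2 * ((ℓ : ℚ) + t + 3) - 2 := by
    have hne : ((ℓ + t + 3 : ℕ) : ℚ) ≠ 0 := ne_of_gt hn
    field_simp
    try push_cast
    try ring
  rw [hexp]
  linarith
end

section
/- On the path $P_7$, in the path-restricted firefighter game with one fire, one firefighter, and unlimited movement distance, the optimal strategy is to defend the neighbour of the fire on the side containing the longer subpath; the number of burnt vertices when the fire starts at position $i$ (positions $1,\dots,7$) is $\min(i, 8-i)$, and the total over all starting vertices is $1+2+3+4+3+2+1 = 16 > 14$, so the expected damage of $P_7$ exceeds that of $C_7$ (which is 2). In particular, removing an edge from $C_7$ strictly increases the path-restricted expected damage. -/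
open SimpleGraph Finset
open scoped Classical

namespace FF

variable {V : Type*} [Fintype V] [DecidableEq V]

lemma mem_spread {G : SimpleGraph V} {D B : Finset V} {v : V} :
    v ∈ spread G D B ↔ v ∈ B ∨ (v ∉ D ∧ ∃ u ∈ B, G.Adj u v) := by
  simp [spread]

lemma mem_posDef {b : ℕ} {p : ℕ → Fin b → V} {t : ℕ} {v : V} :
    v ∈ posDef p t ↔ ∃ τ ≤ t, ∃ j, p τ j = v := by
  simp [posDef, Nat.lt_succ_iff]

lemma pburnt_succ (G : SimpleGraph V) (F : Finset V) {b : ℕ} (p : ℕ → Fin b → V) (t : ℕ) :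
    pburnt G F p (t + 1) = spread G (posDef p t) (pburnt G F p t) := rfl

lemma pburnt_subset_succ (G : SimpleGraph V) (F : Finset V) {b : ℕ}
    (p : ℕ → Fin b → V) (t : ℕ) : pburnt G F p t ⊆ pburnt G F p (t + 1) := by
  intro v hv; rw [pburnt_succ, mem_spread]; exact Or.inl hv

lemma pburnt_mono (G : SimpleGraph V) (F : Finset V) {b : ℕ}
    (p : ℕ → Fin b → V) {t₁ t₂ : ℕ} (h : t₁ ≤ t₂) : pburnt G F p t₁ ⊆ pburnt G F p t₂ := by
  induction t₂ with
  | zero => simp_all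
  | succ t ih =>
    rcases eq_or_lt_of_le h with h' | h'
    · subst h'; exact subset_rfl
    · exact (ih (Nat.lt_succ_iff.mp h')).trans (pburnt_subset_succ G F p t)

/-- Intermediate value property for walks in the path graph. -/
lemma walk_ival {n : ℕ} {a b : Fin n} (w : (SimpleGraph.pathGraph n).Walk a b) :
    ∀ m : ℕ, ((a.val ≤ m ∧ m ≤ b.val) ∨ (b.val ≤ m ∧ m ≤ a.val)) →
    ∃ v ∈ w.support, v.val = m := by
  induction w with
  | nil => rename_i u; intro m h; exact ⟨u, by simp, by omega⟩
  | @cons u x c h' w ih =>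
    intro m h
    by_cases hm : u.val = m
    · exact ⟨u, by simp, hm⟩
    · rw [SimpleGraph.pathGraph_adj] at h'
      obtain ⟨v, hv, hv'⟩ := ih m (by omega)
      exact ⟨v, by simp [hv], hv'⟩

lemma path_lower_right {i : Fin 7} {p : ℕ → Fin 1 → Fin 7}
    (hv : ValidPR (SimpleGraph.pathGraph 7) {i} p) (h0 : i.val < (p 0 0).val) (t : ℕ) :
    (∀ τ ≤ t, i.val < (p τ 0).val) ∧
      ∀ v : Fin 7, i.val - t ≤ v.val → v.val ≤ i.val →
        v ∈ pburnt (SimpleGraph.pathGraph 7) {i} p t := by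
  induction t with
  | zero =>
    refine ⟨fun τ hτ => ?_, fun v h1 h2 => ?_⟩
    · have : τ = 0 := Nat.le_zero.mp hτ
      subst this; exact h0
    · have : v = i := Fin.ext (by omega)
      subst this; simp [pburnt]
  | succ t ih =>
    obtain ⟨ihp, ihb⟩ := ih
    have hi : i ∈ pburnt (SimpleGraph.pathGraph 7) {i} p (t + 1) :=
      pburnt_subset_succ _ _ _ _ (ihb i (by omega) le_rfl)
    have hpos : ∀ τ ≤ t + 1, i.val < (p τ 0).val := by
      intro τ hτ
      rcases eq_or_lt_of_le hτ with h' | h'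
      · subst h'
        obtain ⟨w, hw⟩ := hv.2 t 0
        by_contra hle
        push_neg at hle
        obtain ⟨v, hvs, hvv⟩ := walk_ival w i.val (Or.inr ⟨hle, le_of_lt (ihp t le_rfl)⟩)
        have hvi : v = i := Fin.ext hvv
        exact hw v hvs (hvi ▸ hi)
      · exact ihp τ (Nat.lt_succ_iff.mp h')
    refine ⟨hpos, fun v h1 h2 => ?_⟩
    by_cases hc : i.val - t ≤ v.val
    · exact pburnt_subset_succ _ _ _ _ (ihb v hc h2)
    · have hi7 := i.isLt
      have hv7 : v.val + 1 < 7 := by omega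
      rw [pburnt_succ, mem_spread]
      refine Or.inr ⟨?_, ⟨v.val + 1, hv7⟩, ihb ⟨v.val + 1, hv7⟩ (by simp; omega) (by simp; omega), ?_⟩
      · intro hD
        rw [mem_posDef] at hD
        obtain ⟨τ, hτ, j, hj⟩ := hD
        have hj0 : p τ 0 = v := by rwa [Subsingleton.elim (0 : Fin 1) j]
        have := hpos τ (hτ.trans (Nat.le_succ t))
        rw [hj0] at this; omega
      · rw [SimpleGraph.pathGraph_adj]; right; rfl

lemma path_lower_left {i : Fin 7} {p : ℕ → Fin 1 → Fin 7}
    (hv : ValidPR (SimpleGraph.pathGraph 7) {i} p) (h0 : (p 0 0).val < i.val) (t : ℕ) :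
    (∀ τ ≤ t, (p τ 0).val < i.val) ∧
      ∀ v : Fin 7, i.val ≤ v.val → v.val ≤ i.val + t →
        v ∈ pburnt (SimpleGraph.pathGraph 7) {i} p t := by
  induction t with
  | zero =>
    refine ⟨fun τ hτ => ?_, fun v h1 h2 => ?_⟩
    · have : τ = 0 := Nat.le_zero.mp hτ
      subst this; exact h0
    · have : v = i := Fin.ext (by omega)
      subst this; simp [pburnt]
  | succ t ih =>
    obtain ⟨ihp, ihb⟩ := ih
    have hi : i ∈ pburnt (SimpleGraph.pathGraph 7) {i} p (t + 1) :=
      pburnt_subset_succ _ _ _ _ (ihb i le_rfl (by omega))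
    have hpos : ∀ τ ≤ t + 1, (p τ 0).val < i.val := by
      intro τ hτ
      rcases eq_or_lt_of_le hτ with h' | h'
      · subst h'
        obtain ⟨w, hw⟩ := hv.2 t 0
        by_contra hle
        push_neg at hle
        obtain ⟨v, hvs, hvv⟩ := walk_ival w i.val (Or.inl ⟨le_of_lt (ihp t le_rfl), hle⟩)
        have hvi : v = i := Fin.ext hvv
        exact hw v hvs (hvi ▸ hi)
      · exact ihp τ (Nat.lt_succ_iff.mp h')
    refine ⟨hpos, fun v h1 h2 => ?_⟩
    by_cases hc : v.val ≤ i.val + t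
    · exact pburnt_subset_succ _ _ _ _ (ihb v h1 hc)
    · have hv7 := v.isLt
      have hu7 : v.val - 1 < 7 := by omega
      rw [pburnt_succ, mem_spread]
      refine Or.inr ⟨?_, ⟨v.val - 1, hu7⟩, ihb ⟨v.val - 1, hu7⟩ (by simp; omega) (by simp; omega), ?_⟩
      · intro hD
        rw [mem_posDef] at hD
        obtain ⟨τ, hτ, j, hj⟩ := hD
        have hj0 : p τ 0 = v := by rwa [Subsingleton.elim (0 : Fin 1) j]
        have := hpos τ (hτ.trans (Nat.le_succ t))
        rw [hj0] at this; omega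
      · rw [SimpleGraph.pathGraph_adj]; left; simp; omega

lemma path_card_lower {i : Fin 7} {p : ℕ → Fin 1 → Fin 7}
    (hv : ValidPR (SimpleGraph.pathGraph 7) {i} p) :
    min (i.val + 1) (7 - i.val) ≤ (pburnt (SimpleGraph.pathGraph 7) {i} p 7).card := by
  have h00 := hv.1 0 0
  have hne : (p 0 0).val ≠ i.val := by
    intro h
    exact h00 (by simp [pburnt, Fin.ext h])
  have hi7 := i.isLt
  rcases Nat.lt_or_ge i.val (p 0 0).val with hc | hc
  · calc min (i.val + 1) (7 - i.val) ≤ i.val + 1 := min_le_left _ _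
      _ = (Finset.Iic i).card := (Fin.card_Iic i).symm
      _ ≤ _ := Finset.card_le_card (fun v hv' =>
          (path_lower_right hv hc 7).2 v (by omega) (Fin.le_def.mp (Finset.mem_Iic.mp hv')))
  · have hc' : (p 0 0).val < i.val := by omega
    calc min (i.val + 1) (7 - i.val) ≤ 7 - i.val := min_le_right _ _
      _ = (Finset.Ici i).card := (Fin.card_Ici i).symm
      _ ≤ _ := Finset.card_le_card (fun v hv' =>
          (path_lower_left hv hc' 7).2 v (Fin.le_def.mp (Finset.mem_Ici.mp hv')) (by have := v.isLt; omega))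

lemma pburnt_const_right {i c : Fin 7} (hc : c.val = i.val + 1) (t : ℕ) :
    pburnt (SimpleGraph.pathGraph 7) {i} (fun _ _ => c : ℕ → Fin 1 → Fin 7) t =
      Finset.univ.filter (fun v => i.val - t ≤ v.val ∧ v.val ≤ i.val) := by
  have hi7 := i.isLt
  have hc7 := c.isLt
  induction t with
  | zero =>
    ext v
    simp only [pburnt, Finset.mem_singleton, Finset.mem_filter, Finset.mem_univ, true_and,
      Fin.ext_iff]
    omega
  | succ t ih =>
    rw [pburnt_succ, ih]
    ext v
    rw [mem_spread]
    simp only [Finset.mem_filter, Finset.mem_univ, true_and, mem_posDef]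
    constructor
    · rintro (⟨h1, h2⟩ | ⟨hD, u, ⟨hu1, hu2⟩, hadj⟩)
      · exact ⟨by omega, h2⟩
      · rw [SimpleGraph.pathGraph_adj] at hadj
        have hvc : v.val ≠ c.val := fun h => hD ⟨0, Nat.zero_le _, 0, Fin.ext h.symm⟩
        omega
    · rintro ⟨h1, h2⟩
      by_cases hcase : i.val - t ≤ v.val
      · exact Or.inl ⟨hcase, h2⟩
      · have h7 : v.val + 1 < 7 := by omega
        refine Or.inr ⟨?_, ⟨v.val + 1, h7⟩, ⟨by simp; omega, by simp; omega⟩, ?_⟩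
        · rintro ⟨τ, hτ, j, hj⟩
          have : c.val = v.val := congrArg Fin.val hj
          omega
        · rw [SimpleGraph.pathGraph_adj]; right; rfl

lemma pburnt_const_left {i c : Fin 7} (hc : c.val + 1 = i.val) (t : ℕ) :
    pburnt (SimpleGraph.pathGraph 7) {i} (fun _ _ => c : ℕ → Fin 1 → Fin 7) t =
      Finset.univ.filter (fun v => i.val ≤ v.val ∧ v.val ≤ i.val + t) := by
  have hi7 := i.isLt
  have hc7 := c.isLt
  induction t with
  | zero =>
    ext v
    simp only [pburnt, Finset.mem_singleton, Finset.mem_filter, Finset.mem_univ, true_and,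
      Fin.ext_iff]
    omega
  | succ t ih =>
    rw [pburnt_succ, ih]
    ext v
    rw [mem_spread]
    simp only [Finset.mem_filter, Finset.mem_univ, true_and, mem_posDef]
    constructor
    · rintro (⟨h1, h2⟩ | ⟨hD, u, ⟨hu1, hu2⟩, hadj⟩)
      · exact ⟨h1, by omega⟩
      · rw [SimpleGraph.pathGraph_adj] at hadj
        have hvc : v.val ≠ c.val := fun h => hD ⟨0, Nat.zero_le _, 0, Fin.ext h.symm⟩
        have := v.isLt
        omega
    · rintro ⟨h1, h2⟩
      by_cases hcase : v.val ≤ i.val + t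
      · exact Or.inl ⟨h1, hcase⟩
      · have h7 : v.val - 1 < 7 := by omega
        refine Or.inr ⟨?_, ⟨v.val - 1, h7⟩, ⟨by simp; omega, by simp; omega⟩, ?_⟩
        · rintro ⟨τ, hτ, j, hj⟩
          have : c.val = v.val := congrArg Fin.val hj
          omega
        · rw [SimpleGraph.pathGraph_adj]; left; simp; omega

lemma valid_const_right {i c : Fin 7} (hc : c.val = i.val + 1) :
    ValidPR (SimpleGraph.pathGraph 7) {i} (fun _ _ => c : ℕ → Fin 1 → Fin 7) := by
  constructor
  · intro t j
    rw [pburnt_const_right hc t]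
    simp; omega
  · intro t j
    refine ⟨SimpleGraph.Walk.nil, fun v hvs => ?_⟩
    rw [SimpleGraph.Walk.support_nil, List.mem_singleton] at hvs
    subst hvs
    rw [pburnt_const_right hc]
    simp; omega

lemma valid_const_left {i c : Fin 7} (hc : c.val + 1 = i.val) :
    ValidPR (SimpleGraph.pathGraph 7) {i} (fun _ _ => c : ℕ → Fin 1 → Fin 7) := by
  constructor
  · intro t j
    rw [pburnt_const_left hc t]
    simp; omega
  · intro t j
    refine ⟨SimpleGraph.Walk.nil, fun v hvs => ?_⟩
    rw [SimpleGraph.Walk.support_nil, List.mem_singleton] at hvs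
    subst hvs
    rw [pburnt_const_left hc]
    simp; omega

lemma path_PRMVS (i : Fin 7) :
    PRMVS (SimpleGraph.pathGraph 7) {i} 1 = 7 - min (i.val + 1) (7 - i.val) := by
  have hi7 := i.isLt
  have hwit : (7 - min (i.val + 1) (7 - i.val)) ∈ {k | ∃ p : ℕ → Fin 1 → Fin 7,
      ValidPR (SimpleGraph.pathGraph 7) {i} p ∧
      k = Fintype.card (Fin 7) - (pburnt (SimpleGraph.pathGraph 7) {i} p
        (Fintype.card (Fin 7))).card} := by
    rcases Nat.lt_or_ge i.val 4 with h | h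
    · have hc7 : i.val + 1 < 7 := by omega
      refine ⟨fun _ _ => (⟨i.val + 1, hc7⟩ : Fin 7), valid_const_right rfl, ?_⟩
      rw [Fintype.card_fin, pburnt_const_right rfl 7]
      have : (Finset.univ.filter fun v : Fin 7 => i.val - 7 ≤ v.val ∧ v.val ≤ i.val)
          = Finset.Iic i := by
        ext v; simp only [Finset.mem_filter, Finset.mem_univ, true_and, Finset.mem_Iic, Fin.le_def]; omega
      rw [this, Fin.card_Iic]
      omega
    · have hc7 : i.val - 1 < 7 := by omega
      refine ⟨fun _ _ => (⟨i.val - 1, hc7⟩ : Fin 7), valid_const_left (by simp; omega), ?_⟩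
      rw [Fintype.card_fin, pburnt_const_left (by simp; omega) 7]
      have : (Finset.univ.filter fun v : Fin 7 => i.val ≤ v.val ∧ v.val ≤ i.val + 7)
          = Finset.Ici i := by
        ext v; simp only [Finset.mem_filter, Finset.mem_univ, true_and, Finset.mem_Ici, Fin.le_def]; have := v.isLt; omega
      rw [this, Fin.card_Ici]
      omega
  unfold PRMVS
  apply le_antisymm
  · apply csSup_le ⟨_, hwit⟩
    rintro k ⟨p, hp, rfl⟩
    have := path_card_lower hp
    rw [Fintype.card_fin] at *
    omega
  · exact le_csSup ⟨7, by rintro k ⟨p, hp, rfl⟩; simp⟩ hwit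

lemma fin7_adj_iff (u v : Fin 7) : (SimpleGraph.cycleGraph 7).Adj u v ↔
    ((u.val + 7 - v.val) % 7 = 1 ∨ (v.val + 7 - u.val) % 7 = 1) := by
  rw [SimpleGraph.cycleGraph_adj']
  have hu := u.isLt; have hv := v.isLt
  rw [Fin.sub_def, Fin.sub_def]
  simp only [Fin.val_mk]
  omega

lemma fin7_v1 : ((1:Fin 7)).val = 1 := rfl
lemma fin7_v2 : ((2:Fin 7)).val = 2 := rfl
lemma fin7_v3 : ((3:Fin 7)).val = 3 := rfl
lemma fin7_v4 : ((4:Fin 7)).val = 4 := rfl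
lemma fin7_v5 : ((5:Fin 7)).val = 5 := rfl
lemma fin7_v6 : ((6:Fin 7)).val = 6 := rfl

/-- The cycle strategy: defend `s - 1` first, then move round to `s + 2`. -/
def cstrat (s : Fin 7) : ℕ → Fin 1 → Fin 7 := fun t _ => if t = 0 then s + 6 else s + 2

lemma posDef_cstrat_zero (s : Fin 7) : posDef (cstrat s) 0 = {s + 6} := by
  ext v
  rw [mem_posDef, Finset.mem_singleton]
  constructor
  · rintro ⟨τ, hτ, j, hj⟩
    have : τ = 0 := Nat.le_zero.mp hτ
    subst this
    simpa [cstrat] using hj.symm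
  · rintro rfl
    exact ⟨0, le_rfl, 0, by simp [cstrat]⟩

lemma posDef_cstrat_succ (s : Fin 7) (t : ℕ) :
    posDef (cstrat s) (t + 1) = {s + 6, s + 2} := by
  ext v
  rw [mem_posDef, Finset.mem_insert, Finset.mem_singleton]
  constructor
  · rintro ⟨τ, hτ, j, hj⟩
    rcases Nat.eq_zero_or_pos τ with h | h
    · subst h; left; simpa [cstrat] using hj.symm
    · right; rw [← hj]; simp [cstrat, Nat.pos_iff_ne_zero.mp h]
  · rintro (rfl | rfl)
    · exact ⟨0, Nat.zero_le _, 0, by simp [cstrat]⟩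
    · exact ⟨1, by omega, 0, by simp [cstrat]⟩

lemma pburnt_cstrat (s : Fin 7) (t : ℕ) :
    pburnt (SimpleGraph.cycleGraph 7) {s} (cstrat s) (t + 1) = {s, s + 1} := by
  have hs := s.isLt
  induction t with
  | zero =>
    rw [pburnt_succ, posDef_cstrat_zero]
    ext v
    have hv := v.isLt
    rw [mem_spread]
    simp only [show pburnt (SimpleGraph.cycleGraph 7) {s} (cstrat s) 0 = {s} from rfl,
      Finset.mem_singleton, Finset.mem_insert, exists_eq_left, fin7_adj_iff]
    simp only [ne_eq, Fin.ext_iff, Fin.add_def, Fin.val_mk, fin7_v1, fin7_v6]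
    omega
  | succ t ih =>
    rw [pburnt_succ, posDef_cstrat_succ, ih]
    ext v
    have hv := v.isLt
    rw [mem_spread]
    constructor
    · rintro (h | ⟨hD, u, hu, hadj⟩)
      · exact h
      · have hu7 := u.isLt
        rw [Finset.mem_insert, Finset.mem_singleton] at hu ⊢
        rw [Finset.mem_insert, Finset.mem_singleton] at hD
        push_neg at hD
        obtain ⟨hD1, hD2⟩ := hD
        rw [fin7_adj_iff] at hadj
        simp only [ne_eq, Fin.ext_iff, Fin.add_def, Fin.val_mk, fin7_v1, fin7_v2, fin7_v6] at hu hD1 hD2 ⊢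
        omega
    · intro h; exact Or.inl h

lemma valid_cstrat (s : Fin 7) : ValidPR (SimpleGraph.cycleGraph 7) {s} (cstrat s) := by
  have hs := s.isLt
  constructor
  · intro t j
    cases t with
    | zero =>
      intro h
      rw [show cstrat s 0 j = s + 6 from rfl,
        show pburnt (SimpleGraph.cycleGraph 7) {s} (cstrat s) 0 = {s} from rfl,
        Finset.mem_singleton] at h
      have := congrArg Fin.val h
      simp only [Fin.add_def, Fin.val_mk, fin7_v6] at this
      omega
    | succ t =>
      intro h
      rw [show cstrat s (t + 1) j = s + 2 from rfl, pburnt_cstrat,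
        Finset.mem_insert, Finset.mem_singleton] at h
      rcases h with h | h <;>
        · have := congrArg Fin.val h
          simp only [Fin.add_def, Fin.val_mk, fin7_v1, fin7_v2] at this
          omega
  · intro t j
    cases t with
    | zero =>
      rw [show cstrat s 0 j = s + 6 from rfl, show cstrat s (0 + 1) j = s + 2 from rfl]
      have a65 : (SimpleGraph.cycleGraph 7).Adj (s + 6) (s + 5) := by
        rw [fin7_adj_iff]; simp only [Fin.add_def, Fin.val_mk, fin7_v5, fin7_v6]; omega
      have a54 : (SimpleGraph.cycleGraph 7).Adj (s + 5) (s + 4) := by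
        rw [fin7_adj_iff]; simp only [Fin.add_def, Fin.val_mk, fin7_v4, fin7_v5]; omega
      have a43 : (SimpleGraph.cycleGraph 7).Adj (s + 4) (s + 3) := by
        rw [fin7_adj_iff]; simp only [Fin.add_def, Fin.val_mk, fin7_v3, fin7_v4]; omega
      have a32 : (SimpleGraph.cycleGraph 7).Adj (s + 3) (s + 2) := by
        rw [fin7_adj_iff]; simp only [Fin.add_def, Fin.val_mk, fin7_v2, fin7_v3]; omega
      refine ⟨SimpleGraph.Walk.cons a65 (SimpleGraph.Walk.cons a54
        (SimpleGraph.Walk.cons a43 (SimpleGraph.Walk.cons a32 SimpleGraph.Walk.nil))), ?_⟩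
      intro v hvs
      rw [pburnt_cstrat]
      simp only [SimpleGraph.Walk.support_cons, SimpleGraph.Walk.support_nil,
        List.mem_cons, List.mem_singleton, List.not_mem_nil, or_false] at hvs
      simp only [Finset.mem_insert, Finset.mem_singleton]
      rintro (h | h) <;>
      · rcases hvs with rfl | rfl | rfl | rfl | rfl
        all_goals (
          have := congrArg Fin.val h
          simp only [Fin.add_def, Fin.val_mk, fin7_v1, fin7_v2, fin7_v3, fin7_v4, fin7_v5, fin7_v6] at this
          omega)
    | succ t =>
      rw [show cstrat s (t + 1) j = s + 2 from rfl, show cstrat s (t + 1 + 1) j = s + 2 from rfl]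
      refine ⟨SimpleGraph.Walk.nil, fun v hvs => ?_⟩
      rw [SimpleGraph.Walk.support_nil, List.mem_singleton] at hvs
      subst hvs
      rw [pburnt_cstrat]
      simp only [Finset.mem_insert, Finset.mem_singleton]
      rintro (h | h) <;>
        · have := congrArg Fin.val h
          simp only [Fin.add_def, Fin.val_mk, fin7_v1, fin7_v2] at this
          omega

lemma cycle_card_lower {s : Fin 7} {p : ℕ → Fin 1 → Fin 7}
    (hv : ValidPR (SimpleGraph.cycleGraph 7) {s} p) :
    2 ≤ (pburnt (SimpleGraph.cycleGraph 7) {s} p 7).card := by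
  have hs := s.isLt
  have hD0 : posDef p 0 = {p 0 0} := by
    ext v
    rw [mem_posDef, Finset.mem_singleton]
    constructor
    · rintro ⟨τ, hτ, j, hj⟩
      have hτ0 : τ = 0 := Nat.le_zero.mp hτ
      subst hτ0
      rw [Subsingleton.elim (0 : Fin 1) j]
      exact hj.symm
    · rintro rfl; exact ⟨0, le_rfl, 0, rfl⟩
  have hne : s + 1 ≠ s + 6 := by
    intro h
    have := congrArg Fin.val h
    simp only [Fin.add_def, Fin.val_mk, fin7_v1, fin7_v6] at this
    omega
  have hx : ∃ x : Fin 7, x ≠ s ∧ x ∈ pburnt (SimpleGraph.cycleGraph 7) {s} p 1 := by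
    have hor : s + 1 ∉ ({p 0 0} : Finset (Fin 7)) ∨ s + 6 ∉ ({p 0 0} : Finset (Fin 7)) := by
      by_contra h
      push_neg at h
      simp only [Finset.mem_singleton] at h
      exact hne (h.1.trans h.2.symm)
    have hmem : ∀ x : Fin 7, (SimpleGraph.cycleGraph 7).Adj s x → x ∉ ({p 0 0} : Finset (Fin 7)) →
        x ∈ pburnt (SimpleGraph.cycleGraph 7) {s} p 1 := by
      intro x hadj hxD
      rw [pburnt_succ, mem_spread, hD0]
      exact Or.inr ⟨hxD, s, Finset.mem_singleton_self s, hadj⟩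
    rcases hor with h | h
    · refine ⟨s + 1, ?_, hmem _ ?_ h⟩
      · intro h'
        have := congrArg Fin.val h'
        simp only [Fin.add_def, Fin.val_mk, fin7_v1] at this
        omega
      · rw [fin7_adj_iff]; simp only [Fin.add_def, Fin.val_mk, fin7_v1]; omega
    · refine ⟨s + 6, ?_, hmem _ ?_ h⟩
      · intro h'
        have := congrArg Fin.val h'
        simp only [Fin.add_def, Fin.val_mk, fin7_v6] at this
        omega
      · rw [fin7_adj_iff]; simp only [Fin.add_def, Fin.val_mk, fin7_v6]; omega
  obtain ⟨x, hxs, hx1⟩ := hx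
  have hsub : ({s, x} : Finset (Fin 7)) ⊆ pburnt (SimpleGraph.cycleGraph 7) {s} p 7 := by
    intro v hv'
    rcases Finset.mem_insert.mp hv' with h1 | h1
    · refine pburnt_mono (SimpleGraph.cycleGraph 7) {s} p (by omega : (0:ℕ) ≤ 7) ?_
      rw [h1]
      exact Finset.mem_singleton_self s
    · rw [Finset.mem_singleton] at h1
      rw [h1]
      exact pburnt_mono _ _ _ (by omega : 1 ≤ 7) hx1
  calc 2 = ({s, x} : Finset (Fin 7)).card := by
        rw [Finset.card_insert_of_notMem (by simpa using hxs.symm), Finset.card_singleton]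
    _ ≤ _ := Finset.card_le_card hsub

lemma cycle_PRMVS (s : Fin 7) : PRMVS (SimpleGraph.cycleGraph 7) {s} 1 = 5 := by
  have hs := s.isLt
  have hcard : ({s, s + 1} : Finset (Fin 7)).card = 2 := by
    rw [Finset.card_insert_of_notMem, Finset.card_singleton]
    simp only [Finset.mem_singleton]
    intro h
    have := congrArg Fin.val h
    simp only [Fin.add_def, Fin.val_mk, fin7_v1] at this
    omega
  have hwit : (5 : ℕ) ∈ {k | ∃ p : ℕ → Fin 1 → Fin 7,
      ValidPR (SimpleGraph.cycleGraph 7) {s} p ∧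
      k = Fintype.card (Fin 7) - (pburnt (SimpleGraph.cycleGraph 7) {s} p
        (Fintype.card (Fin 7))).card} := by
    refine ⟨cstrat s, valid_cstrat s, ?_⟩
    rw [Fintype.card_fin,
      show pburnt (SimpleGraph.cycleGraph 7) {s} (cstrat s) 7 = {s, s + 1} from pburnt_cstrat s 6,
      hcard]
  unfold PRMVS
  apply le_antisymm
  · apply csSup_le ⟨_, hwit⟩
    rintro k ⟨p, hp, rfl⟩
    have := cycle_card_lower hp
    rw [Fintype.card_fin] at *
    omega
  · exact le_csSup ⟨7, by rintro k ⟨p, hp, rfl⟩; simp⟩ hwit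

end FF

open FF

theorem stmt4 :
    (∀ i : Fin 7, 7 - FF.PRMVS (SimpleGraph.pathGraph 7) {i} 1 = min ((i : ℕ) + 1) (7 - (i : ℕ))) ∧
    (∑ i : Fin 7, (7 - FF.PRMVS (SimpleGraph.pathGraph 7) {i} 1)) = 16 ∧
    (∑ s : Fin 7, ((7 : ℚ) - FF.PRMVS (SimpleGraph.cycleGraph 7) {s} 1)) / 7 <
      (∑ i : Fin 7, ((7 : ℚ) - FF.PRMVS (SimpleGraph.pathGraph 7) {i} 1)) / 7 := by
  have hpath : ∀ i : Fin 7, 7 - FF.PRMVS (SimpleGraph.pathGraph 7) {i} 1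
      = min ((i : ℕ) + 1) (7 - (i : ℕ)) := by
    intro i
    rw [FF.path_PRMVS i]
    have := i.isLt
    omega
  have hpv : ∀ i : Fin 7, FF.PRMVS (SimpleGraph.pathGraph 7) {i} 1
      = 7 - min ((i : ℕ) + 1) (7 - (i : ℕ)) := fun i => FF.path_PRMVS i
  refine ⟨hpath, ?_, ?_⟩
  · rw [Fin.sum_univ_seven]
    simp only [hpath]
    norm_num [show ((0:Fin 7):ℕ) = 0 from rfl, show ((1:Fin 7):ℕ) = 1 from rfl, show ((2:Fin 7):ℕ) = 2 from rfl, show ((3:Fin 7):ℕ) = 3 from rfl, show ((4:Fin 7):ℕ) = 4 from rfl, show ((5:Fin 7):ℕ) = 5 from rfl, show ((6:Fin 7):ℕ) = 6 from rfl]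
  · rw [Fin.sum_univ_seven, Fin.sum_univ_seven]
    simp only [FF.cycle_PRMVS, hpv]
    norm_num [show ((0:Fin 7):ℕ) = 0 from rfl, show ((1:Fin 7):ℕ) = 1 from rfl, show ((2:Fin 7):ℕ) = 2 from rfl, show ((3:Fin 7):ℕ) = 3 from rfl, show ((4:Fin 7):ℕ) = 4 from rfl, show ((5:Fin 7):ℕ) = 5 from rfl, show ((6:Fin 7):ℕ) = 6 from rfl]
end

section
/- Let $T$ be a caterpillar with spine of length $p > 4$ (spine = vertices of degree $\geq 2$), in which exactly the two spine endpoints have leaf neighbours ($R = 2$), and let $n = |V(T)|$. In the firefighter game where the single firefighter may defend only once, the total number of burnt vertices summed over all $n$ starting positions is at least $2n + p - 6$, so the expected damage is at least $2 + (p-6)/n > 2 - 2/n$. -/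
open SimpleGraph Finset
open scoped Classical

open FF

/-- One-directional edge description of the caterpillar whose spine is the path
`0 - 1 - ⋯ - (p-1)`, with `ℓ` leaves attached to spine endpoint `0`
(vertices `p,…,p+ℓ-1`) and `t` leaves attached to spine endpoint `p-1`
(vertices `p+ℓ,…,p+ℓ+t-1`). -/
def catLink2 (p ℓ : ℕ) {n : ℕ} (a b : Fin n) : Prop :=
  ((b : ℕ) = (a : ℕ) + 1 ∧ (a : ℕ) + 1 < p) ∨
  ((a : ℕ) = 0 ∧ p ≤ (b : ℕ) ∧ (b : ℕ) < p + ℓ) ∨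
  ((a : ℕ) = p - 1 ∧ p + ℓ ≤ (b : ℕ))

/-- The caterpillar with spine of `p` vertices in which only the two spine
endpoints carry leaves (`ℓ` and `t` of them respectively). -/
def catG2 (p ℓ t : ℕ) (hp : 2 ≤ p) : SimpleGraph (Fin (p + ℓ + t)) where
  Adj a b := catLink2 p ℓ a b ∨ catLink2 p ℓ b a
  symm := ⟨fun a b h => h.symm⟩
  loopless := ⟨by
    intro a h
    rcases h with h | h <;> rcases h with h | h | h <;> omega⟩

lemma card_filter_Ico (n a b : ℕ) (hb : b ≤ n) :
    (Finset.univ.filter (fun x : Fin n => a ≤ (x : ℕ) ∧ (x : ℕ) < b)).card = b - a := by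
  rw [← Nat.card_Ico a b]
  refine Finset.card_bij (fun x _ => (x : ℕ)) ?_ ?_ ?_
  · intro x hx; simp only [mem_filter, mem_univ, true_and] at hx
    simp [Finset.mem_Ico, hx.1, hx.2]
  · intro x _ y _ h; exact Fin.ext h
  · intro k hk
    simp only [Finset.mem_Ico] at hk
    exact ⟨⟨k, lt_of_lt_of_le hk.2 hb⟩, by simp [hk.1, hk.2], rfl⟩

def lbN (p ℓ t k : ℕ) : ℕ :=
  1 + (if k < p - 1 then 1 else 0) + (if 2 ≤ k ∧ k ≤ p - 3 then 1 else 0)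
    + (if k = 0 then ℓ - 1 else 0) + (if k = p - 1 then t else 0)

lemma sum_lbN (p ℓ t : ℕ) (hp : 4 < p) (hℓ : 1 ≤ ℓ) (ht : 1 ≤ t) :
    ∑ s : Fin (p + ℓ + t), lbN p ℓ t (s : ℕ) = 2 * (p + ℓ + t) + p - 6 := by
  rw [Fin.sum_univ_eq_sum_range (fun k => lbN p ℓ t k)]
  simp only [lbN, Finset.sum_add_distrib, Finset.sum_ite_eq' (Finset.range (p + ℓ + t))]
  rw [Finset.sum_boole, Finset.sum_boole]
  have h1 : (Finset.range (p + ℓ + t)).filter (fun k => k < p - 1) = Finset.range (p - 1) := by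
    ext k; simp; omega
  have h2 : (Finset.range (p + ℓ + t)).filter (fun k => 2 ≤ k ∧ k ≤ p - 3)
      = Finset.Ico 2 (p - 2) := by
    ext k; simp [Finset.mem_Ico]; omega
  rw [h1, h2]
  simp only [Nat.card_Ico, Finset.card_range, Finset.mem_range, Finset.sum_const,
    smul_eq_mul, mul_one, Nat.cast_id]
  split_ifs <;> omega

lemma main_lb (p ℓ t : ℕ) (hp : 4 < p) (hℓ : 1 ≤ ℓ) (ht : 1 ≤ t) (s : Fin (p + ℓ + t)) :
    lbN p ℓ t (s : ℕ) ≤ sdBurnt (catG2 p ℓ t (by linarith)) s := by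
  have hnp : p + ℓ ≤ p + ℓ + t := by omega
  have hsn : (s : ℕ) < p + ℓ + t := s.isLt
  set G := catG2 p ℓ t (by omega : 2 ≤ p) with hG
  have hadj : ∀ a b : Fin (p + ℓ + t), catLink2 p ℓ a b → G.Adj a b := by
    intro a b h
    show catLink2 p ℓ a b ∨ catLink2 p ℓ b a
    exact Or.inl h
  apply le_csInf
  · by_cases h0 : (s : ℕ) = 0
    · exact ⟨_, ⟨⟨1, by omega⟩, by simp [Fin.ext_iff]; omega, rfl⟩⟩
    · exact ⟨_, ⟨⟨0, by omega⟩, by simp [Fin.ext_iff]; omega, rfl⟩⟩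
  rintro k ⟨w, hw, rfl⟩
  have key : ∀ S : Finset (Fin (p + ℓ + t)), (∀ x ∈ S, ∃ q : G.Walk s x, w ∉ q.support) →
      S.card ≤ (Finset.univ.filter (fun x => ∃ q : G.Walk s x, w ∉ q.support)).card :=
    fun S h => Finset.card_le_card (fun x hx => Finset.mem_filter.2 ⟨Finset.mem_univ _, h x hx⟩)
  have nilwalk : ∃ q : G.Walk s s, w ∉ q.support := ⟨Walk.nil, by simpa using hw⟩
  have edgew : ∀ x : Fin (p + ℓ + t), G.Adj s x → w ≠ x → ∃ q : G.Walk s x, w ∉ q.support := by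
    intro x h h2
    exact ⟨Walk.cons h Walk.nil, by simp [hw, h2]⟩
  have edgew2 : ∀ x y : Fin (p + ℓ + t), G.Adj s x → G.Adj x y → w ≠ x → w ≠ y →
      ∃ q : G.Walk s y, w ∉ q.support := by
    intro x y h h' h2 h3
    exact ⟨Walk.cons h (Walk.cons h' Walk.nil), by simp [hw, h2, h3]⟩
  by_cases hi0 : (s : ℕ) = 0
  · -- s = 0, bound ℓ + 1
    have hlb : lbN p ℓ t (s : ℕ) = ℓ + 1 := by
      simp only [lbN]; split_ifs <;> omega
    rw [hlb]
    set L0 : Finset (Fin (p + ℓ + t)) :=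
      Finset.univ.filter (fun x => p ≤ (x : ℕ) ∧ (x : ℕ) < p + ℓ) with hL0
    have hcardL0 : L0.card = ℓ := by
      rw [hL0, card_filter_Ico (p + ℓ + t) p (p + ℓ) hnp]; omega
    have memL0 : ∀ x : Fin (p + ℓ + t), x ∈ L0 ↔ p ≤ (x : ℕ) ∧ (x : ℕ) < p + ℓ := by
      intro x; simp [hL0]
    have adjL0 : ∀ x ∈ L0, G.Adj s x := by
      intro x hx; rw [memL0] at hx
      exact hadj _ _ (Or.inr (Or.inl ⟨hi0, hx.1, hx.2⟩))
    by_cases hwL : w ∈ L0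
    · have hwv := (memL0 w).1 hwL
      set v1 : Fin (p + ℓ + t) := ⟨1, by omega⟩ with hv1
      refine le_trans ?_ (key (insert s (insert v1 (L0.erase w))) ?_)
      · rw [Finset.card_insert_of_notMem, Finset.card_insert_of_notMem,
          Finset.card_erase_of_mem hwL, hcardL0]
        · omega
        · intro h; rw [Finset.mem_erase, memL0] at h; simp [hv1, Fin.ext_iff] at h; omega
        · intro h; rw [Finset.mem_insert] at h
          rcases h with h | h
          · rw [Fin.ext_iff] at h; simp [hv1] at h; omega
          · rw [Finset.mem_erase, memL0] at h; omega
      · intro x hx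
        rw [Finset.mem_insert, Finset.mem_insert] at hx
        rcases hx with rfl | rfl | hx
        · exact nilwalk
        · refine edgew _ (hadj _ _ (Or.inl ⟨by simp [hv1]; omega, by omega⟩)) ?_
          rw [Ne, Fin.ext_iff]; simp [hv1]; omega
        · exact edgew _ (adjL0 _ (Finset.mem_of_mem_erase hx))
            (Ne.symm (Finset.ne_of_mem_erase hx))
    · refine le_trans ?_ (key (insert s L0) ?_)
      · rw [Finset.card_insert_of_notMem, hcardL0]
        intro h; rw [memL0] at h; omega
      · intro x hx
        rw [Finset.mem_insert] at hx
        rcases hx with rfl | hx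
        · exact nilwalk
        · refine edgew _ (adjL0 _ hx) (fun h => hwL ?_); rwa [h]
  · by_cases hip : (s : ℕ) = p - 1
    · -- s = p - 1, bound t + 1
      have hlb : lbN p ℓ t (s : ℕ) = t + 1 := by
        simp only [lbN]; split_ifs <;> omega
      rw [hlb]
      set L1 : Finset (Fin (p + ℓ + t)) :=
        Finset.univ.filter (fun x => p + ℓ ≤ (x : ℕ) ∧ (x : ℕ) < p + ℓ + t) with hL1
      have hcardL1 : L1.card = t := by
        rw [hL1, card_filter_Ico (p + ℓ + t) (p + ℓ) (p + ℓ + t) le_rfl]; omega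
      have memL1 : ∀ x : Fin (p + ℓ + t), x ∈ L1 ↔ p + ℓ ≤ (x : ℕ) ∧ (x : ℕ) < p + ℓ + t := by
        intro x; simp [hL1]
      have adjL1 : ∀ x ∈ L1, G.Adj s x := by
        intro x hx; rw [memL1] at hx
        exact hadj _ _ (Or.inr (Or.inr ⟨hip, hx.1⟩))
      by_cases hwL : w ∈ L1
      · have hwv := (memL1 w).1 hwL
        set v2 : Fin (p + ℓ + t) := ⟨p - 2, by omega⟩ with hv2
        refine le_trans ?_ (key (insert s (insert v2 (L1.erase w))) ?_)
        · rw [Finset.card_insert_of_notMem, Finset.card_insert_of_notMem,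
            Finset.card_erase_of_mem hwL, hcardL1]
          · omega
          · intro h; rw [Finset.mem_erase, memL1] at h; simp [hv2, Fin.ext_iff] at h; omega
          · intro h; rw [Finset.mem_insert] at h
            rcases h with h | h
            · rw [Fin.ext_iff] at h; simp [hv2] at h; omega
            · rw [Finset.mem_erase, memL1] at h; omega
        · intro x hx
          rw [Finset.mem_insert, Finset.mem_insert] at hx
          rcases hx with rfl | rfl | hx
          · exact nilwalk
          · refine edgew _ (G.adj_symm (hadj _ _ (Or.inl ⟨by simp [hv2]; omega, by simp [hv2]; omega⟩))) ?_
            rw [Ne, Fin.ext_iff]; simp [hv2]; omega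
          · exact edgew _ (adjL1 _ (Finset.mem_of_mem_erase hx))
              (Ne.symm (Finset.ne_of_mem_erase hx))
      · refine le_trans ?_ (key (insert s L1) ?_)
        · rw [Finset.card_insert_of_notMem, hcardL1]
          intro h; rw [memL1] at h; omega
        · intro x hx
          rw [Finset.mem_insert] at hx
          rcases hx with rfl | hx
          · exact nilwalk
          · refine edgew _ (adjL1 _ hx) (fun h => hwL ?_); rwa [h]
    · by_cases hintp : (s : ℕ) < p
      · have h1 : 1 ≤ (s : ℕ) ∧ (s : ℕ) ≤ p - 2 := by omega
        by_cases h23 : 2 ≤ (s : ℕ) ∧ (s : ℕ) ≤ p - 3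
        · -- bound 3
          have hlb : lbN p ℓ t (s : ℕ) = 3 := by
            simp only [lbN]; split_ifs <;> omega
          rw [hlb]
          by_cases hw3 : (w : ℕ) = (s : ℕ) + 1 ∨ (w : ℕ) = (s : ℕ) + 2
          · set a1 : Fin (p + ℓ + t) := ⟨(s : ℕ) - 1, by omega⟩ with ha1
            set a2 : Fin (p + ℓ + t) := ⟨(s : ℕ) - 2, by omega⟩ with ha2
            have hadj1 : G.Adj s a1 :=
              G.adj_symm (hadj _ _ (Or.inl ⟨by simp [ha1]; omega, by simp [ha1]; omega⟩))
            have hadj2 : G.Adj a1 a2 :=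
              G.adj_symm (hadj _ _ (Or.inl ⟨by simp [ha1, ha2]; omega, by simp [ha2]; omega⟩))
            refine le_trans ?_ (key {s, a1, a2} ?_)
            · rw [Finset.card_insert_of_notMem, Finset.card_insert_of_notMem,
                Finset.card_singleton]
              · simp only [Finset.mem_singleton, Fin.ext_iff, ha1, ha2] <;> omega
              · simp only [Finset.mem_insert, Finset.mem_singleton, Fin.ext_iff, ha1, ha2] <;> omega
            · intro x hx
              rw [Finset.mem_insert, Finset.mem_insert, Finset.mem_singleton] at hx
              rcases hx with rfl | rfl | rfl
              · exact nilwalk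
              · exact edgew _ hadj1 (by rw [Ne, Fin.ext_iff]; simp [ha1]; omega)
              · exact edgew2 a1 _ hadj1 hadj2 (by rw [Ne, Fin.ext_iff]; simp [ha1]; omega)
                  (by rw [Ne, Fin.ext_iff]; simp [ha2]; omega)
          · set b1 : Fin (p + ℓ + t) := ⟨(s : ℕ) + 1, by omega⟩ with hb1
            set b2 : Fin (p + ℓ + t) := ⟨(s : ℕ) + 2, by omega⟩ with hb2
            have hadj1 : G.Adj s b1 := hadj _ _ (Or.inl ⟨by simp [hb1], by omega⟩)
            have hadj2 : G.Adj b1 b2 :=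
              hadj _ _ (Or.inl ⟨by simp [hb1, hb2], by simp [hb1]; omega⟩)
            refine le_trans ?_ (key {s, b1, b2} ?_)
            · rw [Finset.card_insert_of_notMem, Finset.card_insert_of_notMem,
                Finset.card_singleton]
              · simp only [Finset.mem_singleton, Fin.ext_iff, hb1, hb2] <;> omega
              · simp only [Finset.mem_insert, Finset.mem_singleton, Fin.ext_iff, hb1, hb2] <;> omega
            · intro x hx
              rw [Finset.mem_insert, Finset.mem_insert, Finset.mem_singleton] at hx
              rcases hx with rfl | rfl | rfl
              · exact nilwalk
              · exact edgew _ hadj1 (by rw [Ne, Fin.ext_iff]; simp [hb1]; omega)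
              · exact edgew2 b1 _ hadj1 hadj2 (by rw [Ne, Fin.ext_iff]; simp [hb1]; omega)
                  (by rw [Ne, Fin.ext_iff]; simp [hb2]; omega)
        · -- bound 2
          have hlb : lbN p ℓ t (s : ℕ) = 2 := by
            simp only [lbN]; split_ifs <;> omega
          rw [hlb]
          by_cases hw1 : (w : ℕ) = (s : ℕ) + 1
          · set a1 : Fin (p + ℓ + t) := ⟨(s : ℕ) - 1, by omega⟩ with ha1
            have hadj1 : G.Adj s a1 :=
              G.adj_symm (hadj _ _ (Or.inl ⟨by simp [ha1]; omega, by simp [ha1]; omega⟩))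
            refine le_trans ?_ (key {s, a1} ?_)
            · rw [Finset.card_insert_of_notMem, Finset.card_singleton]
              simp only [Finset.mem_singleton, Fin.ext_iff, ha1] <;> omega
            · intro x hx
              rw [Finset.mem_insert, Finset.mem_singleton] at hx
              rcases hx with rfl | rfl
              · exact nilwalk
              · exact edgew _ hadj1 (by rw [Ne, Fin.ext_iff]; simp [ha1]; omega)
          · set b1 : Fin (p + ℓ + t) := ⟨(s : ℕ) + 1, by omega⟩ with hb1
            have hadj1 : G.Adj s b1 := hadj _ _ (Or.inl ⟨by simp [hb1], by omega⟩)
            refine le_trans ?_ (key {s, b1} ?_)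
            · rw [Finset.card_insert_of_notMem, Finset.card_singleton]
              simp only [Finset.mem_singleton, Fin.ext_iff, hb1] <;> omega
            · intro x hx
              rw [Finset.mem_insert, Finset.mem_singleton] at hx
              rcases hx with rfl | rfl
              · exact nilwalk
              · exact edgew _ hadj1 (by rw [Ne, Fin.ext_iff]; simp [hb1]; omega)
      · -- leaf, bound 1
        have hlb : lbN p ℓ t (s : ℕ) = 1 := by
          simp only [lbN]; split_ifs <;> omega
        rw [hlb]
        refine le_trans ?_ (key {s} ?_)
        · simp
        · intro x hx
          rw [Finset.mem_singleton] at hx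
          subst hx
          exact nilwalk


theorem stmt8 (p ℓ t : ℕ) (hp : 4 < p) (hℓ : 1 ≤ ℓ) (ht : 1 ≤ t) :
    (2 * (p + ℓ + t : ℤ) + p - 6 ≤
        ∑ s : Fin (p + ℓ + t), (FF.sdBurnt (catG2 p ℓ t (by omega)) s : ℤ)) ∧
    2 + ((p : ℚ) - 6) / ((p + ℓ + t : ℕ) : ℚ) ≤
      (∑ s : Fin (p + ℓ + t), (FF.sdBurnt (catG2 p ℓ t (by omega)) s : ℚ)) /
        ((p + ℓ + t : ℕ) : ℚ) ∧
    2 - 2 / ((p + ℓ + t : ℕ) : ℚ) < 2 + ((p : ℚ) - 6) / ((p + ℓ + t : ℕ) : ℚ) := by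
  have hn0 : (0:ℚ) < ((p + ℓ + t : ℕ) : ℚ) := by
    have : 0 < p + ℓ + t := by omega
    exact_mod_cast this
  have hsum : 2 * (p + ℓ + t : ℤ) + p - 6 ≤
      ∑ s : Fin (p + ℓ + t), (FF.sdBurnt (catG2 p ℓ t (by omega)) s : ℤ) := by
    have h1 : ∑ s : Fin (p + ℓ + t), ((lbN p ℓ t (s : ℕ) : ℤ)) ≤
        ∑ s : Fin (p + ℓ + t), (FF.sdBurnt (catG2 p ℓ t (by omega)) s : ℤ) :=
      Finset.sum_le_sum (fun s _ => by exact_mod_cast main_lb p ℓ t hp hℓ ht s)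
    have h2 : ∑ s : Fin (p + ℓ + t), ((lbN p ℓ t (s : ℕ) : ℤ))
        = ((2 * (p + ℓ + t) + p - 6 : ℕ) : ℤ) := by
      rw [← Nat.cast_sum, sum_lbN p ℓ t hp hℓ ht]
    rw [h2] at h1
    have : ((2 * (p + ℓ + t) + p - 6 : ℕ) : ℤ) = 2 * (p + ℓ + t : ℤ) + p - 6 := by
      push_cast [Nat.cast_sub (by omega : 6 ≤ 2 * (p + ℓ + t) + p)]; ring
    omega
  have hsumQ : 2 * ((p + ℓ + t : ℕ) : ℚ) + p - 6 ≤
      ∑ s : Fin (p + ℓ + t), (FF.sdBurnt (catG2 p ℓ t (by omega)) s : ℚ) := by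
    exact_mod_cast hsum
  refine ⟨hsum, ?_, ?_⟩
  · have h : 2 + ((p : ℚ) - 6) / ((p + ℓ + t : ℕ) : ℚ)
        = (2 * ((p + ℓ + t : ℕ) : ℚ) + p - 6) / ((p + ℓ + t : ℕ) : ℚ) := by
      field_simp; ring
    rw [h]
    exact div_le_div_of_nonneg_right hsumQ hn0.le
  · have hp5 : (5:ℚ) ≤ (p:ℚ) := by exact_mod_cast hp
    have hpos : (0:ℚ) < (((p:ℚ) - 6) + 2) / ((p + ℓ + t : ℕ) : ℚ) :=
      div_pos (by linarith) hn0
    have hd : ((p:ℚ) - 6) / ((p + ℓ + t : ℕ) : ℚ) + 2 / ((p + ℓ + t : ℕ) : ℚ)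
        = (((p:ℚ) - 6) + 2) / ((p + ℓ + t : ℕ) : ℚ) := (add_div _ _ _).symm
    linarith
end

section
/- Let $T$ be a caterpillar with spine of $p > 2$ vertices (spine = vertices of degree $\geq 2$, both spine endpoints have off-spine leaf neighbours), where $R > 2$ spine vertices have off-spine neighbours, with $r_i \geq 1$ off-spine neighbours each, and $n = |V(T)|$. In the single-defence firefighter game, the total burnt count over all $n$ starting vertices is at least $2n - 2p + R + (R-2)\min_i r_i + (p-R)\min_i r_i + (p - 2) \geq 2n + R - 4$, so the expected damage is at least $2 + (R-4)/n > 2 - 2/n$. -/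
open SimpleGraph Finset
open scoped Classical

open FF

/-- One-directional edge description of a general caterpillar: the spine is the
path on `Fin p` and spine vertex `i` carries `r i` off-spine leaves. -/
def catLink3 (p : ℕ) (r : Fin p → ℕ) :
    (Fin p ⊕ Σ i : Fin p, Fin (r i)) → (Fin p ⊕ Σ i : Fin p, Fin (r i)) → Prop
  | Sum.inl a, Sum.inl b => (b : ℕ) = (a : ℕ) + 1
  | Sum.inl a, Sum.inr x => a = x.1
  | _, _ => False

/-- The caterpillar with spine path `Fin p` and `r i` leaves on spine vertex `i`. -/
def catG3 (p : ℕ) (r : Fin p → ℕ) : SimpleGraph (Fin p ⊕ Σ i : Fin p, Fin (r i)) where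
  Adj x y := catLink3 p r x y ∨ catLink3 p r y x
  symm := ⟨fun x y h => h.symm⟩
  loopless := by
    exact ⟨by rintro (a | x) h <;> rcases h with h | h <;> simp only [catLink3] at h <;> omega⟩

section Aux
variable {p : ℕ} {r : Fin p → ℕ}

lemma cat_adj_spine {a b : Fin p} (h : (b:ℕ) = (a:ℕ) + 1) :
    (catG3 p r).Adj (Sum.inl a) (Sum.inl b) := Or.inl h

lemma cat_adj_leaf (i : Fin p) (j : Fin (r i)) :
    (catG3 p r).Adj (Sum.inl i) (Sum.inr ⟨i, j⟩) := Or.inl rfl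

lemma spine_walk_up : ∀ (n : ℕ) (a b : Fin p), (b:ℕ) = (a:ℕ) + n →
    ∃ q : (catG3 p r).Walk (Sum.inl a) (Sum.inl b),
      ∀ v ∈ q.support, ∃ c : Fin p, v = Sum.inl c ∧ (a:ℕ) ≤ c ∧ (c:ℕ) ≤ b := by
  intro n
  induction n with
  | zero =>
    intro a b h
    have : a = b := Fin.ext (by omega)
    subst this
    exact ⟨SimpleGraph.Walk.nil, by simp⟩
  | succ n ih =>
    intro a b h
    have ha1 : (a:ℕ) + 1 < p := by have := b.isLt; omega
    set a' : Fin p := ⟨(a:ℕ) + 1, ha1⟩ with ha'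
    obtain ⟨q, hq⟩ := ih a' b (by simp [ha']; omega)
    refine ⟨SimpleGraph.Walk.cons (cat_adj_spine rfl) q, ?_⟩
    intro v hv
    rw [SimpleGraph.Walk.support_cons, List.mem_cons] at hv
    rcases hv with hv | hv
    · exact ⟨a, hv, le_refl _, by omega⟩
    · obtain ⟨c, hc1, hc2, hc3⟩ := hq v hv
      exact ⟨c, hc1, by simp [ha'] at hc2; omega, hc3⟩

lemma spine_walk (i j : Fin p) :
    ∃ q : (catG3 p r).Walk (Sum.inl i) (Sum.inl j),
      ∀ v ∈ q.support, ∃ c : Fin p, v = Sum.inl c ∧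
        (min (i:ℕ) (j:ℕ) ≤ c ∧ (c:ℕ) ≤ max (i:ℕ) (j:ℕ)) := by
  rcases le_total (i:ℕ) (j:ℕ) with h | h
  · obtain ⟨q, hq⟩ := spine_walk_up (p := p) (r := r) ((j:ℕ) - i) i j (by omega)
    refine ⟨q, fun v hv => ?_⟩
    obtain ⟨c, h1, h2, h3⟩ := hq v hv
    exact ⟨c, h1, by omega, by omega⟩
  · obtain ⟨q, hq⟩ := spine_walk_up (p := p) (r := r) ((i:ℕ) - j) j i (by omega)
    refine ⟨q.reverse, fun v hv => ?_⟩
    rw [SimpleGraph.Walk.support_reverse, List.mem_reverse] at hv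
    obtain ⟨c, h1, h2, h3⟩ := hq v hv
    exact ⟨c, h1, by omega, by omega⟩

end Aux
section Aux2
variable {p : ℕ} {r : Fin p → ℕ}

noncomputable def leavesOf (p : ℕ) (r : Fin p → ℕ) (i : Fin p) :
    Finset (Fin p ⊕ Σ i : Fin p, Fin (r i)) :=
  Finset.univ.image (fun j : Fin (r i) => Sum.inr ⟨i, j⟩)

lemma mem_leavesOf {i : Fin p} {x} :
    x ∈ leavesOf p r i ↔ ∃ j : Fin (r i), x = Sum.inr ⟨i, j⟩ := by
  simp [leavesOf, eq_comm]

lemma card_leavesOf (i : Fin p) : (leavesOf p r i).card = r i := by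
  rw [leavesOf, Finset.card_image_of_injective _ (fun a b h => by
    simpa using h), Finset.card_univ, Fintype.card_fin]

noncomputable def reachSet {V : Type*} [Fintype V] [DecidableEq V]
    (G : SimpleGraph V) (s w : V) : Finset V :=
  Finset.univ.filter (fun x => ∃ q : G.Walk s x, w ∉ q.support)

lemma mem_reachSet {V : Type*} [Fintype V] [DecidableEq V] {G : SimpleGraph V} {s w x : V} :
    x ∈ reachSet G s w ↔ ∃ q : G.Walk s x, w ∉ q.support := by
  simp [reachSet]

lemma le_sdBurnt {V : Type*} [Fintype V] [DecidableEq V] (G : SimpleGraph V) (s : V) (k : ℕ)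
    (hne : ∃ w : V, w ≠ s)
    (h : ∀ w : V, w ≠ s →
      k ≤ (reachSet G s w).card) :
    k ≤ sdBurnt G s := by
  apply le_csInf
  · obtain ⟨w, hw⟩ := hne; exact ⟨_, w, hw, rfl⟩
  · rintro b ⟨w, hw, rfl⟩
    refine le_trans (h w hw) (le_of_eq ?_)
    congr 1

lemma leaf_bound (_hp : 0 < p) (i : Fin p) (j : Fin (r i)) :
    1 ≤ sdBurnt (catG3 p r) (Sum.inr ⟨i, j⟩) := by
  apply le_sdBurnt _ _ _ ⟨Sum.inl i, by simp⟩
  · intro w hw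
    rw [Nat.one_le_iff_ne_zero, ← Nat.pos_iff_ne_zero, Finset.card_pos]
    refine ⟨Sum.inr ⟨i, j⟩, mem_reachSet.mpr ⟨SimpleGraph.Walk.nil, by simp [hw]⟩⟩

end Aux2
section Aux3
variable {p : ℕ} {r : Fin p → ℕ}

lemma spine_bound1 (hp : 2 ≤ p) (i : Fin p) :
    1 + r i ≤ sdBurnt (catG3 p r) (Sum.inl i) := by
  obtain ⟨i', hi'⟩ : ∃ i' : Fin p, ((i':ℕ) = (i:ℕ) + 1 ∨ (i:ℕ) = (i':ℕ) + 1) := by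
    rcases Nat.lt_or_ge ((i:ℕ)+1) p with h | h
    · exact ⟨⟨(i:ℕ)+1, h⟩, Or.inl rfl⟩
    · have hi := i.isLt
      exact ⟨⟨(i:ℕ)-1, by omega⟩, Or.inr (by simp; omega)⟩
  have hne : Sum.inl (α := Fin p) (β := Σ i : Fin p, Fin (r i)) i ≠ Sum.inl i' := by
    simp only [ne_eq, Sum.inl.injEq, Fin.ext_iff]; omega
  have hadj : (catG3 p r).Adj (Sum.inl i) (Sum.inl i') := by
    rcases hi' with h | h
    · exact Or.inl h
    · exact Or.inr h
  apply le_sdBurnt _ _ _ ⟨Sum.inl i', Ne.symm hne⟩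
  intro w hw
  classical
  set A : Finset (Fin p ⊕ Σ i : Fin p, Fin (r i)) :=
    insert (Sum.inl i) (insert (Sum.inl i') (leavesOf p r i)) with hA
  have hsub : A \ {w} ⊆ reachSet (catG3 p r) (Sum.inl i) w := by
    intro v hv
    rw [Finset.mem_sdiff, Finset.mem_singleton] at hv
    obtain ⟨hvA, hvw⟩ := hv
    rw [mem_reachSet]
    rw [hA, Finset.mem_insert, Finset.mem_insert] at hvA
    rcases hvA with rfl | rfl | hvl
    · refine ⟨SimpleGraph.Walk.nil, ?_⟩
      rw [SimpleGraph.Walk.support_nil, List.mem_singleton]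
      exact hw
    · refine ⟨SimpleGraph.Walk.cons hadj SimpleGraph.Walk.nil, ?_⟩
      intro hmem
      rw [SimpleGraph.Walk.support_cons, SimpleGraph.Walk.support_nil] at hmem
      rcases List.mem_cons.mp hmem with h | h
      · exact hw h
      · exact hvw (List.mem_singleton.mp h).symm
    · obtain ⟨j, rfl⟩ := mem_leavesOf.mp hvl
      refine ⟨SimpleGraph.Walk.cons (cat_adj_leaf i j) SimpleGraph.Walk.nil, ?_⟩
      intro hmem
      rw [SimpleGraph.Walk.support_cons, SimpleGraph.Walk.support_nil] at hmem
      rcases List.mem_cons.mp hmem with h | h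
      · exact hw h
      · exact hvw (List.mem_singleton.mp h).symm
  have hcA : A.card = 2 + r i := by
    rw [hA, Finset.card_insert_of_notMem, Finset.card_insert_of_notMem, card_leavesOf]
    all_goals first | omega | simp [mem_leavesOf, hne]
  have h1 : A.card - ({w} : Finset _).card ≤ (A \ {w}).card := Finset.le_card_sdiff _ _
  have h2 := Finset.card_le_card hsub
  simp only [Finset.card_singleton, hcA] at h1
  omega

lemma spine_bound2 (hp : 2 < p) (h0 : 1 ≤ r ⟨0, Nat.lt_trans Nat.zero_lt_two hp⟩)
    (hlast : 1 ≤ r ⟨p-1, Nat.sub_lt (Nat.lt_trans Nat.zero_lt_two hp) Nat.one_pos⟩)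
    {m : ℕ} (hm : m = sInf {k | ∃ i, 1 ≤ r i ∧ k = r i})
    (i : Fin p) (hi0 : 0 < (i:ℕ)) (hip : (i:ℕ) < p - 1) :
    2 + r i + m ≤ sdBurnt (catG3 p r) (Sum.inl i) := by
  classical
  have hiLt := i.isLt
  apply le_sdBurnt _ _ _ ⟨Sum.inl ⟨0, by omega⟩, by simp [Fin.ext_iff]; omega⟩
  intro w hw
  rcases w with k | ⟨a, b⟩
  · -- defended vertex is a spine vertex k ≠ i
    have hki : (k:ℕ) ≠ (i:ℕ) := fun h => hw (by simp [Fin.ext_iff, h])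
    obtain ⟨e, hre, hei, hrange⟩ : ∃ e : Fin p, 1 ≤ r e ∧ (e:ℕ) ≠ (i:ℕ) ∧
        ∀ c : Fin p, min (i:ℕ) (e:ℕ) ≤ (c:ℕ) → (c:ℕ) ≤ max (i:ℕ) (e:ℕ) →
          (c:ℕ) ≠ (k:ℕ) := by
      by_cases hk : (k:ℕ) < (i:ℕ)
      · refine ⟨⟨p-1, by omega⟩, hlast, by simp; omega, fun c h1 h2 => ?_⟩
        simp only [Fin.val_mk] at h1 h2; omega
      · refine ⟨⟨0, by omega⟩, h0, by simp; omega, fun c h1 h2 => ?_⟩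
        simp only [Fin.val_mk] at h1 h2; omega
    have hm_le : m ≤ r e := by rw [hm]; exact Nat.sInf_le ⟨e, hre, rfl⟩
    set A : Finset (Fin p ⊕ Σ i : Fin p, Fin (r i)) :=
      ({Sum.inl i, Sum.inl e} : Finset _) ∪ (leavesOf p r i ∪ leavesOf p r e) with hA
    have hsub : A ⊆ reachSet (catG3 p r) (Sum.inl i) (Sum.inl k) := by
      intro v hv
      rw [mem_reachSet]
      rw [hA, Finset.mem_union, Finset.mem_union, Finset.mem_insert, Finset.mem_singleton]
        at hv
      obtain ⟨q, hq⟩ := spine_walk (r := r) i e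
      rcases hv with (rfl | rfl) | hvl | hvl
      · refine ⟨SimpleGraph.Walk.nil, ?_⟩
        rw [SimpleGraph.Walk.support_nil, List.mem_singleton]
        simp only [Sum.inl.injEq, Fin.ext_iff]
        omega
      · refine ⟨q, fun hmem => ?_⟩
        obtain ⟨c, hc1, hc2, hc3⟩ := hq _ hmem
        rw [Sum.inl.injEq] at hc1
        exact hrange c hc2 hc3 (by rw [← hc1])
      · obtain ⟨j, rfl⟩ := mem_leavesOf.mp hvl
        refine ⟨SimpleGraph.Walk.cons (cat_adj_leaf i j) SimpleGraph.Walk.nil, ?_⟩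
        intro hmem
        rw [SimpleGraph.Walk.support_cons, SimpleGraph.Walk.support_nil] at hmem
        rcases List.mem_cons.mp hmem with h | h
        · rw [Sum.inl.injEq] at h; exact hki (by rw [h])
        · exact (by simpa using List.mem_singleton.mp h)
      · obtain ⟨j, rfl⟩ := mem_leavesOf.mp hvl
        refine ⟨q.append (SimpleGraph.Walk.cons (cat_adj_leaf e j) SimpleGraph.Walk.nil), ?_⟩
        intro hmem
        rw [SimpleGraph.Walk.support_append, List.mem_append] at hmem
        rcases hmem with h | h
        · obtain ⟨c, hc1, hc2, hc3⟩ := hq _ h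
          rw [Sum.inl.injEq] at hc1
          exact hrange c hc2 hc3 (by rw [← hc1])
        · rw [SimpleGraph.Walk.support_cons, SimpleGraph.Walk.support_nil] at h
          simp at h
    have hdisj1 : Disjoint ({Sum.inl i, Sum.inl e} : Finset (Fin p ⊕ Σ i : Fin p, Fin (r i)))
        (leavesOf p r i ∪ leavesOf p r e) := by
      rw [Finset.disjoint_left]
      intro x hx hx'
      rw [Finset.mem_union, mem_leavesOf, mem_leavesOf] at hx'
      rcases Finset.mem_insert.mp hx with rfl | hx
      · rcases hx' with ⟨j, h⟩ | ⟨j, h⟩ <;> simp at h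
      · rw [Finset.mem_singleton] at hx; subst hx
        rcases hx' with ⟨j, h⟩ | ⟨j, h⟩ <;> simp at h
    have hdisj2 : Disjoint (leavesOf p r i) (leavesOf p r e) := by
      rw [Finset.disjoint_left]
      intro x hx hx'
      rw [mem_leavesOf] at hx hx'
      obtain ⟨j, rfl⟩ := hx
      obtain ⟨j', hj'⟩ := hx'
      rw [Sum.inr.injEq, Sigma.mk.inj_iff] at hj'
      exact hei (by rw [hj'.1])
    have hcA : A.card = 2 + (r i + r e) := by
      rw [hA, Finset.card_union_of_disjoint hdisj1, Finset.card_union_of_disjoint hdisj2,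
        card_leavesOf, card_leavesOf, Finset.card_pair (by simp [Fin.ext_iff]; omega)]
    have := Finset.card_le_card hsub
    omega
  · -- defended vertex is a leaf
    have hm_le : m ≤ r ⟨0, by omega⟩ := by rw [hm]; exact Nat.sInf_le ⟨_, h0, rfl⟩
    have hsub : Finset.univ \ {(Sum.inr ⟨a, b⟩ : Fin p ⊕ Σ i : Fin p, Fin (r i))} ⊆
        reachSet (catG3 p r) (Sum.inl i) (Sum.inr ⟨a, b⟩) := by
      intro v hv
      rw [Finset.mem_sdiff, Finset.mem_singleton] at hv
      obtain ⟨-, hvw⟩ := hv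
      rw [mem_reachSet]
      rcases v with c | ⟨c, d⟩
      · obtain ⟨q, hq⟩ := spine_walk (r := r) i c
        refine ⟨q, fun hmem => ?_⟩
        obtain ⟨c', hc', -⟩ := hq _ hmem
        simp at hc'
      · obtain ⟨q, hq⟩ := spine_walk (r := r) i c
        refine ⟨q.append (SimpleGraph.Walk.cons (cat_adj_leaf c d) SimpleGraph.Walk.nil), ?_⟩
        intro hmem
        rw [SimpleGraph.Walk.support_append, List.mem_append] at hmem
        rcases hmem with h | h
        · obtain ⟨c', hc', -⟩ := hq _ h
          simp at hc'
        · rw [SimpleGraph.Walk.support_cons, SimpleGraph.Walk.support_nil,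
            List.tail_cons] at h
          exact hvw (List.mem_singleton.mp h).symm
    have hsum : r i + r ⟨0, by omega⟩ ≤ ∑ j, r j := by
      have hne : i ≠ ⟨0, by omega⟩ := by simp [Fin.ext_iff]; omega
      calc r i + r ⟨0, by omega⟩ = ∑ x ∈ ({i, ⟨0, by omega⟩} : Finset (Fin p)), r x :=
            (Finset.sum_pair hne).symm
        _ ≤ ∑ x, r x := Finset.sum_le_sum_of_subset (Finset.subset_univ _)
    have hcardU : Fintype.card (Fin p ⊕ Σ i : Fin p, Fin (r i)) = p + ∑ j, r j := by
      simp [Fintype.card_sum, Fintype.card_sigma]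
    have hcd : (Finset.univ \ {(Sum.inr ⟨a, b⟩ : Fin p ⊕ Σ i : Fin p, Fin (r i))}).card
        = (p + ∑ j, r j) - 1 := by
      rw [Finset.card_sdiff_of_subset (Finset.subset_univ _), Finset.card_singleton,
        Finset.card_univ, hcardU]
    have := Finset.card_le_card hsub
    omega

end Aux3
section Aux4
variable {p : ℕ} {r : Fin p → ℕ}

lemma total_bound (hp : 2 < p) (h0 : 1 ≤ r ⟨0, Nat.lt_trans Nat.zero_lt_two hp⟩)
    (hlast : 1 ≤ r ⟨p-1, Nat.sub_lt (Nat.lt_trans Nat.zero_lt_two hp) Nat.one_pos⟩)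
    {m : ℕ} (hm : m = sInf {k | ∃ i, 1 ≤ r i ∧ k = r i}) :
    p + 2 * (∑ i, r i) + (p - 2) * (1 + m) ≤
      ∑ v : Fin p ⊕ Σ i : Fin p, Fin (r i), sdBurnt (catG3 p r) v := by
  classical
  rw [Fintype.sum_sum_type]
  have hleaf : ∑ i, r i ≤ ∑ x : Σ i : Fin p, Fin (r i), sdBurnt (catG3 p r) (Sum.inr x) := by
    rw [← Finset.univ_sigma_univ, Finset.sum_sigma]
    apply Finset.sum_le_sum
    intro i _
    calc r i = ∑ _j : Fin (r i), 1 := by simp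
      _ ≤ ∑ j : Fin (r i), sdBurnt (catG3 p r) (Sum.inr ⟨i, j⟩) :=
          Finset.sum_le_sum fun j _ => leaf_bound (by omega) i j
  have hspine : ∀ i : Fin p,
      (1 + r i) + (if 0 < (i:ℕ) ∧ (i:ℕ) < p - 1 then 1 + m else 0)
        ≤ sdBurnt (catG3 p r) (Sum.inl i) := by
    intro i
    by_cases h : 0 < (i:ℕ) ∧ (i:ℕ) < p - 1
    · rw [if_pos h]
      have := spine_bound2 hp h0 hlast hm i h.1 h.2
      omega
    · rw [if_neg h]
      simpa using spine_bound1 (by omega) i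
  have hsp : ∑ i : Fin p, ((1 + r i) + (if 0 < (i:ℕ) ∧ (i:ℕ) < p - 1 then 1 + m else 0))
      ≤ ∑ i : Fin p, sdBurnt (catG3 p r) (Sum.inl i) :=
    Finset.sum_le_sum fun i _ => hspine i
  have hfilter : (Finset.univ.filter (fun i : Fin p => 0 < (i:ℕ) ∧ (i:ℕ) < p - 1)).card
      = p - 2 := by
    have he : (Finset.univ.filter (fun i : Fin p => 0 < (i:ℕ) ∧ (i:ℕ) < p - 1)) =
        Finset.univ \ {⟨0, by omega⟩, ⟨p-1, by omega⟩} := by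
      ext i
      simp only [Finset.mem_filter, Finset.mem_univ, true_and, Finset.mem_sdiff,
        Finset.mem_insert, Finset.mem_singleton, Fin.ext_iff, Fin.val_mk]
      have := i.isLt
      omega
    rw [he, Finset.card_sdiff_of_subset (Finset.subset_univ _), Finset.card_univ, Fintype.card_fin,
      Finset.card_pair (by simp [Fin.ext_iff]; omega)]
  have hsum2 : ∑ i : Fin p,
      ((1 + r i) + (if 0 < (i:ℕ) ∧ (i:ℕ) < p - 1 then 1 + m else 0))
      = (p + ∑ i, r i) + (p - 2) * (1 + m) := by
    rw [Finset.sum_add_distrib, Finset.sum_add_distrib, ← Finset.sum_filter,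
      Finset.sum_const, Finset.sum_const, smul_eq_mul, smul_eq_mul, hfilter,
      Finset.card_univ, Fintype.card_fin]
    ring
  rw [hsum2] at hsp
  omega

end Aux4
theorem stmt9 (p : ℕ) (hp : 2 < p) (r : Fin p → ℕ)
    (h0 : 1 ≤ r ⟨0, by omega⟩) (hlast : 1 ≤ r ⟨p - 1, by omega⟩)
    (R m n total : ℕ)
    (hR : R = (Finset.univ.filter fun i => 1 ≤ r i).card)
    (hR2 : 2 < R)
    (hm : m = sInf {k | ∃ i, 1 ≤ r i ∧ k = r i})
    (hn : n = p + ∑ i, r i)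
    (htotal : total =
      ∑ v : Fin p ⊕ Σ i : Fin p, Fin (r i), FF.sdBurnt (catG3 p r) v) :
    (2 * (n : ℤ) - 2 * p + R + ((R : ℤ) - 2) * m + ((p : ℤ) - R) * m + ((p : ℤ) - 2)
        ≤ (total : ℤ)) ∧
    (2 * (n : ℤ) + R - 4 ≤
      2 * (n : ℤ) - 2 * p + R + ((R : ℤ) - 2) * m + ((p : ℤ) - R) * m + ((p : ℤ) - 2)) ∧
    (2 + ((R : ℚ) - 4) / (n : ℚ) ≤ (total : ℚ) / (n : ℚ)) ∧
    (2 - 2 / (n : ℚ) < 2 + ((R : ℚ) - 4) / (n : ℚ)) := by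
  have hm1 : 1 ≤ m := by
    rw [hm]
    refine le_csInf ⟨r ⟨0, by omega⟩, ⟨0, by omega⟩, h0, rfl⟩ ?_
    rintro b ⟨i, hi, rfl⟩
    exact hi
  have hRp : R ≤ p := by
    rw [hR]
    calc (Finset.univ.filter fun i : Fin p => 1 ≤ r i).card ≤ Finset.univ.card :=
          Finset.card_filter_le _ _
      _ = p := by simp
  have key : p + 2 * (∑ i, r i) + (p - 2) * (1 + m) ≤ total := by
    rw [htotal]
    exact total_bound hp h0 hlast hm
  have keyZ : (p : ℤ) + 2 * (∑ i, r i) + ((p : ℤ) - 2) * (1 + m) ≤ (total : ℤ) := by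
    have h2 : ((p - 2 : ℕ) : ℤ) = (p : ℤ) - 2 := by
      have : 2 ≤ p := by omega
      push_cast [this]; ring
    calc (p : ℤ) + 2 * (∑ i, r i) + ((p : ℤ) - 2) * (1 + m)
        = ((p + 2 * (∑ i, r i) + (p - 2) * (1 + m) : ℕ) : ℤ) := by push_cast [h2]; ring
      _ ≤ (total : ℤ) := by exact_mod_cast key
  have hnZ : (n : ℤ) = (p : ℤ) + ∑ i, r i := by rw [hn]; push_cast; ring
  have hRpZ : (R : ℤ) ≤ (p : ℤ) := by exact_mod_cast hRp
  have hm1Z : (1 : ℤ) ≤ (m : ℤ) := by exact_mod_cast hm1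
  have hpZ : (2 : ℤ) < (p : ℤ) := by exact_mod_cast hp
  have c1 : 2 * (n : ℤ) - 2 * p + R + ((R : ℤ) - 2) * m + ((p : ℤ) - R) * m + ((p : ℤ) - 2)
      ≤ (total : ℤ) := by nlinarith [keyZ, hnZ, hRpZ, hm1Z]
  have c2 : 2 * (n : ℤ) + R - 4 ≤
      2 * (n : ℤ) - 2 * p + R + ((R : ℤ) - 2) * m + ((p : ℤ) - R) * m + ((p : ℤ) - 2) := by
    nlinarith [hm1Z, hpZ]
  have hn0 : (0 : ℚ) < (n : ℚ) := by
    have : 0 < n := by omega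
    exact_mod_cast this
  have c3 : 2 + ((R : ℚ) - 4) / (n : ℚ) ≤ (total : ℚ) / (n : ℚ) := by
    have hZ : (2 * (n : ℤ) + R - 4 : ℤ) ≤ (total : ℤ) := le_trans c2 c1
    have hQ : 2 * (n : ℚ) + R - 4 ≤ (total : ℚ) := by exact_mod_cast hZ
    rw [show (2 : ℚ) + ((R : ℚ) - 4) / n = (2 * n + R - 4) / n by field_simp; ring]
    gcongr
  have c4 : 2 - 2 / (n : ℚ) < 2 + ((R : ℚ) - 4) / (n : ℚ) := by
    have hR3 : (3 : ℚ) ≤ (R : ℚ) := by exact_mod_cast hR2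
    have h : (-2 : ℚ) / n < ((R : ℚ) - 4) / n := by
      apply div_lt_div_of_pos_right ?_ hn0
      linarith
    have heq : (2 : ℚ) - 2 / n = 2 + (-2) / n := by ring
    rw [heq]
    exact add_lt_add_right h 2
  exact ⟨c1, c2, c3, c4⟩
end

section
/- Fix $b \geq 1$. Let $G_\ell$ be constructed by joining each vertex of a connected graph $G_B$ on exactly $b+1$ vertices to a distinct vertex of a connected graph $G_A$ on at least $b+1$ vertices via internally disjoint paths with $\ell$ internal vertices each. Then in the path-restricted game with $b$ fires and $b$ firefighters and unlimited movement distance, the total burnt count over all $\binom{|V(G_\ell)|}{b}$ initial configurations is $O(\ell^b)$: configurations with some fire within distance 1 of $V(G_A) \cup V(G_B)$ number $O(\ell^{b-1})$ and each burns $O(\ell)$ vertices, while in all remaining configurations at most $2b$ vertices burn. -/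
open SimpleGraph Finset
open scoped Classical

open FF

/-- One-directional edge description of the construction `G_ℓ`: the disjoint
union of `G_A`, `G_B` and, for each vertex `w` of `G_B`, a path with `ℓ`
internal vertices joining `f w ∈ G_A` to `w ∈ G_B`. -/
def glink {A B : Type*} (GA : SimpleGraph A) (GB : SimpleGraph B) (f : B → A) (ℓ : ℕ) :
    (A ⊕ B ⊕ (B × Fin ℓ)) → (A ⊕ B ⊕ (B × Fin ℓ)) → Prop
  | Sum.inl a, Sum.inl a2 => GA.Adj a a2
  | Sum.inr (Sum.inl b1), Sum.inr (Sum.inl b2) => GB.Adj b1 b2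
  | Sum.inl a, Sum.inr (Sum.inr x) => a = f x.1 ∧ (x.2 : ℕ) = 0
  | Sum.inr (Sum.inr x), Sum.inr (Sum.inr y) => x.1 = y.1 ∧ (y.2 : ℕ) = (x.2 : ℕ) + 1
  | Sum.inr (Sum.inl b1), Sum.inr (Sum.inr x) => b1 = x.1 ∧ (x.2 : ℕ) = ℓ - 1
  | _, _ => False

/-- The graph `G_ℓ` of the construction. -/
def Gconn {A B : Type*} (GA : SimpleGraph A) (GB : SimpleGraph B) (f : B → A) (ℓ : ℕ) :
    SimpleGraph (A ⊕ B ⊕ (B × Fin ℓ)) where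
  Adj x y := glink GA GB f ℓ x y ∨ glink GA GB f ℓ y x
  symm := ⟨fun x y h => h.symm⟩
  loopless := ⟨by
    rintro (a | b | x) h
    · exact GA.loopless.irrefl a (by rcases h with h | h <;> exact h)
    · exact GB.loopless.irrefl b (by rcases h with h | h <;> exact h)
    · rcases h with h | h <;> exact absurd h.2 (by omega)⟩


set_option linter.unusedSectionVars false
set_option maxHeartbeats 1000000

section Strategy

def node (A : Type*) {B : Type*} {ℓ : ℕ} (w : B) (j : ℕ) (h : j < ℓ) : A ⊕ B ⊕ (B × Fin ℓ) :=
  Sum.inr (Sum.inr (w, ⟨j, h⟩))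


variable {A B : Type*} [Fintype A] [DecidableEq A] [Fintype B] [DecidableEq B]
variable (GA : SimpleGraph A) (GB : SimpleGraph B) (f : B → A) {ℓ : ℕ}

lemma node_congr {w : B} {j j' : ℕ} (h : j < ℓ) (h' : j' < ℓ) (e : j = j') :
    node A w j h = node A w j' h' := by subst e; rfl

lemma node_inj {w w' : B} {j j' : ℕ} {h : j < ℓ} {h' : j' < ℓ}
    (he : node A w j h = node A w' j' h') : w = w' ∧ j = j' := by
  simp only [node, Sum.inr.injEq, Prod.mk.injEq, Fin.mk.injEq] at he
  exact he

lemma adj_succ (w : B) (j : ℕ) (h0 : j < ℓ) (h : j + 1 < ℓ) :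
    (Gconn GA GB f ℓ).Adj (node A w j h0) (node A w (j+1) h) := Or.inl ⟨rfl, rfl⟩

lemma adj_A0 (w : B) (h : 0 < ℓ) :
    (Gconn GA GB f ℓ).Adj (Sum.inl (f w)) (node A w 0 h) := Or.inl ⟨rfl, rfl⟩

lemma adj_Btop (w : B) (h : ℓ - 1 < ℓ) :
    (Gconn GA GB f ℓ).Adj (Sum.inr (Sum.inl w)) (node A w (ℓ-1) h) := Or.inl ⟨rfl, rfl⟩

lemma adj_interior {w : B} {j : ℕ} (h1 : 1 ≤ j) (h2 : j + 2 ≤ ℓ) (h : j < ℓ)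
    (hm : j - 1 < ℓ) (hp : j + 1 < ℓ)
    {v : A ⊕ B ⊕ (B × Fin ℓ)} (hadj : (Gconn GA GB f ℓ).Adj (node A w j h) v) :
    v = node A w (j-1) hm ∨ v = node A w (j+1) hp := by
  rcases v with a | bb | ⟨w', jf⟩
  · rcases hadj with hg | hg
    · exact hg.elim
    · exfalso; have h0 : j = 0 := by simpa [node] using hg.2
      omega
  · rcases hadj with hg | hg
    · exact hg.elim
    · exfalso; have h0 : j = ℓ - 1 := by simpa [node] using hg.2
      omega
  · rcases hadj with ⟨hw, hj⟩ | ⟨hw, hj⟩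
    · right
      simp only [node] at hw hj ⊢
      refine congrArg _ (congrArg _ ?_)
      exact Prod.ext hw.symm (Fin.ext (by simpa using hj))
    · left
      simp only [node] at hw hj ⊢
      refine congrArg _ (congrArg _ ?_)
      exact Prod.ext hw (Fin.ext (by simp at hj ⊢; omega))

/-- descending walk along a path, from `(w, k+d)` to `(w, k)`. -/
lemma walk_desc (w : B) (k : ℕ) : ∀ (d : ℕ) (i : ℕ) (hik : i = k + d) (hi : i < ℓ) (hk : k < ℓ),
    ∃ P : (Gconn GA GB f ℓ).Walk (node A w i hi) (node A w k hk),
      ∀ v ∈ P.support, ∃ (t : ℕ) (ht : t < ℓ), k ≤ t ∧ t ≤ i ∧ v = node A w t ht := by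
  intro d
  induction d with
  | zero =>
    intro i hik hi hk
    have he : node A w k hk = node A w i hi := node_congr _ _ (by omega)
    refine ⟨SimpleGraph.Walk.nil.copy he rfl, ?_⟩
    intro v hv
    simp only [SimpleGraph.Walk.support_copy, SimpleGraph.Walk.support_nil,
      List.mem_singleton] at hv
    exact ⟨i, hi, by omega, le_refl _, by rw [hv, he]⟩
  | succ d ih =>
    intro i hik hi hk
    have hi' : k + d < ℓ := by omega
    obtain ⟨P, hP⟩ := ih (k + d) rfl hi' hk
    have hadj : (Gconn GA GB f ℓ).Adj (node A w i hi) (node A w (k+d) hi') := by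
      have h2 := adj_succ GA GB f (A := A) w (k+d) hi' (show k + d + 1 < ℓ by omega)
      have he : node A w (k+d+1) (show k + d + 1 < ℓ by omega) = node A w i hi :=
        node_congr _ _ (by omega)
      exact he ▸ h2.symm
    refine ⟨SimpleGraph.Walk.cons hadj P, ?_⟩
    intro v hv
    rw [SimpleGraph.Walk.support_cons] at hv
    rcases List.mem_cons.mp hv with rfl | hv'
    · exact ⟨i, hi, by omega, le_refl _, rfl⟩
    · obtain ⟨t, ht, h1, h2, h3⟩ := hP v hv'
      exact ⟨t, ht, h1, by omega, h3⟩

lemma walk_desc' (w : B) (i k : ℕ) (hik : k ≤ i) (hi : i < ℓ) (hk : k < ℓ) :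
    ∃ P : (Gconn GA GB f ℓ).Walk (node A w i hi) (node A w k hk),
      ∀ v ∈ P.support, ∃ (t : ℕ) (ht : t < ℓ), k ≤ t ∧ t ≤ i ∧ v = node A w t ht :=
  walk_desc GA GB f w k (i - k) i (by omega) hi hk


/-- fires on path `w` strictly below `j`. -/
def belows (Fp : Finset (B × ℕ)) (w : B) (j : ℕ) : Finset ℕ :=
  (Fp.filter (fun q => q.1 = w ∧ q.2 < j)).image Prod.snd

/-- fires on path `w`. -/
def pfires (Fp : Finset (B × ℕ)) (w : B) : Finset ℕ :=
  (Fp.filter (fun q => q.1 = w)).image Prod.snd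

/-- position (index on the path) to which the defender of fire `(w, j)` moves at time 1. -/
noncomputable def tgtJ (Fp : Finset (B × ℕ)) (w : B) (j : ℕ) : ℕ :=
  if (belows Fp w j).Nonempty then (belows Fp w j).sup id + 2 else (pfires Fp w).sup id + 2

lemma mem_pfires {Fp : Finset (B × ℕ)} {w : B} {k : ℕ} : k ∈ pfires Fp w ↔ (w, k) ∈ Fp := by
  constructor
  · rintro hk
    simp only [pfires, Finset.mem_image, Finset.mem_filter] at hk
    obtain ⟨⟨w', k'⟩, ⟨hq, rfl⟩, rfl⟩ := hk
    exact hq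
  · intro h
    simp only [pfires, Finset.mem_image, Finset.mem_filter]
    exact ⟨(w, k), ⟨h, rfl⟩, rfl⟩

lemma mem_belows {Fp : Finset (B × ℕ)} {w : B} {j k : ℕ} :
    k ∈ belows Fp w j ↔ (w, k) ∈ Fp ∧ k < j := by
  constructor
  · rintro hk
    simp only [belows, Finset.mem_image, Finset.mem_filter] at hk
    obtain ⟨⟨w', k'⟩, ⟨hq, rfl, hlt⟩, rfl⟩ := hk
    exact ⟨hq, hlt⟩
  · rintro ⟨h, hlt⟩
    simp only [belows, Finset.mem_image, Finset.mem_filter]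
    exact ⟨(w, k), ⟨h, rfl, hlt⟩, rfl⟩

lemma tgt_specA {Fp : Finset (B × ℕ)} {w : B} {j : ℕ} (hne : (belows Fp w j).Nonempty) :
    ∃ q, (w, q) ∈ Fp ∧ q < j ∧ tgtJ Fp w j = q + 2 ∧ (∀ k, (w, k) ∈ Fp → k < j → k ≤ q) := by
  obtain ⟨q, hq, hsup⟩ := Finset.exists_mem_eq_sup _ hne id
  simp only [id_eq] at hsup
  rw [mem_belows] at hq
  refine ⟨q, hq.1, hq.2, by simp [tgtJ, hne, hsup], ?_⟩
  intro k hk hlt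
  have : k ≤ (belows Fp w j).sup id := Finset.le_sup (f := id) (mem_belows.mpr ⟨hk, hlt⟩)
  omega

lemma tgt_specB {Fp : Finset (B × ℕ)} {w : B} {j : ℕ} (hj : (w, j) ∈ Fp)
    (hne : ¬ (belows Fp w j).Nonempty) :
    ∃ q, (w, q) ∈ Fp ∧ j ≤ q ∧ tgtJ Fp w j = q + 2 ∧ (∀ k, (w, k) ∈ Fp → k ≤ q) := by
  have hpf : (pfires Fp w).Nonempty := ⟨j, mem_pfires.mpr hj⟩
  obtain ⟨q, hq, hsup⟩ := Finset.exists_mem_eq_sup _ hpf id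
  simp only [id_eq] at hsup
  rw [mem_pfires] at hq
  have hub : ∀ k, (w, k) ∈ Fp → k ≤ q := by
    intro k hk
    have : k ≤ (pfires Fp w).sup id := Finset.le_sup (f := id) (mem_pfires.mpr hk)
    omega
  exact ⟨q, hq, hub j hj, by simp [tgtJ, hne, hsup], hub⟩

lemma tgt_fire {Fp : Finset (B × ℕ)} {w : B} {j : ℕ} (hj : (w, j) ∈ Fp) :
    ∃ q, (w, q) ∈ Fp ∧ tgtJ Fp w j = q + 2 := by
  by_cases hne : (belows Fp w j).Nonempty
  · obtain ⟨q, h1, _, h3, _⟩ := tgt_specA hne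
    exact ⟨q, h1, h3⟩
  · obtain ⟨q, h1, _, h3, _⟩ := tgt_specB hj hne
    exact ⟨q, h1, h3⟩

/-- every fire's upper block position `j+2` is some defender's time-1 target. -/
lemma tgt_cover (Fp : Finset (B × ℕ)) (w : B) (jq : ℕ) (h : (w, jq) ∈ Fp) :
    ∃ j', (w, j') ∈ Fp ∧ tgtJ Fp w j' = jq + 2 := by
  by_cases hab : ((pfires Fp w).filter (fun k => jq < k)).Nonempty
  · set j' := ((pfires Fp w).filter (fun k => jq < k)).min' hab with hj'def
    have hj'mem := ((pfires Fp w).filter (fun k => jq < k)).min'_mem hab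
    rw [Finset.mem_filter, mem_pfires] at hj'mem
    obtain ⟨hj'F, hj'gt⟩ := hj'mem
    refine ⟨j', hj'F, ?_⟩
    have hne : (belows Fp w j').Nonempty := ⟨jq, mem_belows.mpr ⟨h, hj'gt⟩⟩
    obtain ⟨q, hqF, hqlt, htgt, hmax⟩ := tgt_specA hne
    have h1 : jq ≤ q := hmax jq h hj'gt
    have h2 : q ≤ jq := by
      by_contra hcon
      have : j' ≤ q := Finset.min'_le _ _ (by
        rw [Finset.mem_filter, mem_pfires]; exact ⟨hqF, by omega⟩)
      omega
    rw [htgt]; omega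
  · set j' := (pfires Fp w).min' ⟨jq, mem_pfires.mpr h⟩ with hj'def
    have hj'mem := (pfires Fp w).min'_mem ⟨jq, mem_pfires.mpr h⟩
    rw [mem_pfires] at hj'mem
    refine ⟨j', hj'mem, ?_⟩
    have hne : ¬ (belows Fp w j').Nonempty := by
      rintro ⟨k, hk⟩
      rw [mem_belows] at hk
      have : j' ≤ k := Finset.min'_le _ _ (mem_pfires.mpr hk.1)
      omega
    obtain ⟨q, hqF, hqle, htgt, hmax⟩ := tgt_specB hj'mem hne
    have h1 : jq ≤ q := hmax jq h
    have h2 : q ≤ jq := by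
      by_contra hcon
      exact hab ⟨q, by rw [Finset.mem_filter, mem_pfires]; exact ⟨hqF, by omega⟩⟩
    rw [htgt]; omega


variable [Nonempty B]

/-- For configurations whose fires are all deep inside the connecting paths and
pairwise far apart, at most `2b` vertices burn. -/
lemma good_strategy (hGA : GA.Connected) (hGB : GB.Connected) {b : ℕ}
    (hb : 1 ≤ b) (hℓ : 1 ≤ ℓ) (hB : b + 1 ≤ Fintype.card B)
    (F : Finset (A ⊕ B ⊕ (B × Fin ℓ))) (hcard : F.card = b)
    (hgood : ∀ x ∈ F, ∃ (w : B) (j : ℕ) (hj : j < ℓ), x = node A w j hj ∧ 2 ≤ j ∧ j + 3 ≤ ℓ)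
    (hsep : ∀ (w : B) (j j' : ℕ) (hj : j < ℓ) (hj' : j' < ℓ),
      node A w j hj ∈ F → node A w j' hj' ∈ F → j < j' → j + 4 ≤ j') :
    Fintype.card (A ⊕ B ⊕ (B × Fin ℓ)) - 2 * b ≤ FF.PRMVS (Gconn GA GB f ℓ) F b := by
  classical
  set G := Gconn GA GB f ℓ with hG
  -- the projected fire set
  set proj : (A ⊕ B ⊕ (B × Fin ℓ)) → B × ℕ := fun v => match v with
    | Sum.inr (Sum.inr q) => (q.1, (q.2 : ℕ))
    | _ => (Classical.arbitrary B, 0) with hproj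
  set Fp : Finset (B × ℕ) := F.image proj with hFpdef
  have hmemFp : ∀ (w : B) (k : ℕ) (hk : k < ℓ), node A w k hk ∈ F → (w, k) ∈ Fp := by
    intro w k hk h
    exact Finset.mem_image_of_mem proj h
  have hFpmem : ∀ (w : B) (k : ℕ), (w, k) ∈ Fp →
      ∃ hk : k < ℓ, node A w k hk ∈ F ∧ 2 ≤ k ∧ k + 3 ≤ ℓ := by
    intro w k h
    rw [hFpdef, Finset.mem_image] at h
    obtain ⟨x, hx, hpx⟩ := h
    obtain ⟨w', k', hk', rfl, hk2, hk3⟩ := hgood x hx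
    have : (w', k') = (w, k) := hpx
    rw [Prod.mk.injEq] at this
    obtain ⟨rfl, rfl⟩ := this
    exact ⟨hk', hx, hk2, hk3⟩
  have hFpbound : ∀ (w : B) (k : ℕ), (w, k) ∈ Fp → 2 ≤ k ∧ k + 3 ≤ ℓ := by
    intro w k h; obtain ⟨hk, _, h2, h3⟩ := hFpmem w k h; exact ⟨h2, h3⟩
  have hsepFp : ∀ (w : B) (k k' : ℕ), (w, k) ∈ Fp → (w, k') ∈ Fp → k < k' → k + 4 ≤ k' := by
    intro w k k' h h' hlt
    obtain ⟨hk, hF, _, _⟩ := hFpmem w k h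
    obtain ⟨hk', hF', _, _⟩ := hFpmem w k' h'
    exact hsep w k k' hk hk' hF hF' hlt
  -- a fire-free path
  have hfree : ∃ w : B, ∀ k, (w, k) ∉ Fp := by
    by_contra hcon
    push_neg at hcon
    have hsub : (Finset.univ : Finset B) ⊆ Fp.image Prod.fst := by
      intro w _
      obtain ⟨k, hk⟩ := hcon w
      exact Finset.mem_image_of_mem _ hk
    have h1 := Finset.card_le_card hsub
    have h2 : (Fp.image Prod.fst).card ≤ b := by
      calc (Fp.image Prod.fst).card ≤ Fp.card := Finset.card_image_le
        _ ≤ F.card := Finset.card_image_le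
        _ = b := hcard
    simp only [Finset.card_univ] at h1
    omega
  obtain ⟨wstar, hwstar⟩ := hfree
  -- enumerate the fires
  set e := Finset.equivFinOfCardEq hcard with he
  set fire : Fin b → (A ⊕ B ⊕ (B × Fin ℓ)) := fun i => (e.symm i : {x // x ∈ F}) with hfire
  have hfireF : ∀ i, fire i ∈ F := fun i => (e.symm i).2
  have hfire_surj : ∀ x, ∀ hx : x ∈ F, ∃ i, fire i = x := by
    intro x hx
    exact ⟨e ⟨x, hx⟩, by simp [hfire]⟩
  choose w j hj hnode h2 h3 using fun i => hgood (fire i) (hfireF i)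
  have hfireFp : ∀ i, (w i, j i) ∈ Fp := fun i => hmemFp _ _ _ (hnode i ▸ hfireF i)
  -- positions
  have hjm : ∀ i, j i - 1 < ℓ := by intro i; have := hj i; omega
  have htgtlt : ∀ i, tgtJ Fp (w i) (j i) < ℓ := by
    intro i
    obtain ⟨q, hqF, htq⟩ := tgt_fire (hfireFp i)
    have := (hFpbound _ _ hqF).2
    omega
  set p0 : Fin b → (A ⊕ B ⊕ (B × Fin ℓ)) := fun i => node A (w i) (j i - 1) (hjm i) with hp0
  set p1 : Fin b → (A ⊕ B ⊕ (B × Fin ℓ)) := fun i => node A (w i) (tgtJ Fp (w i) (j i)) (htgtlt i)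
    with hp1
  set p : ℕ → Fin b → (A ⊕ B ⊕ (B × Fin ℓ)) := fun t => if t = 0 then p0 else p1 with hp
  -- the eventual burnt region
  set gshift : (A ⊕ B ⊕ (B × Fin ℓ)) → (A ⊕ B ⊕ (B × Fin ℓ)) := fun v => match v with
    | Sum.inr (Sum.inr q) => Sum.inr (Sum.inr (q.1, (⟨((q.2 : ℕ) + 1) % ℓ,
        Nat.mod_lt _ q.2.pos⟩ : Fin ℓ)))
    | x => x with hgshift
  set S : Finset (A ⊕ B ⊕ (B × Fin ℓ)) := F ∪ F.image gshift with hS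
  have hSmem : ∀ v, v ∈ S → ∃ (w' : B) (k : ℕ), (w', k) ∈ Fp ∧
      ∃ (tt : ℕ) (htt : tt < ℓ), (tt = k ∨ tt = k + 1) ∧ v = node A w' tt htt := by
    intro v hv
    rw [hS, Finset.mem_union] at hv
    rcases hv with hv | hv
    · obtain ⟨w', k, hk, rfl, hk2, hk3⟩ := hgood v hv
      exact ⟨w', k, hmemFp _ _ _ hv, k, hk, Or.inl rfl, rfl⟩
    · rw [Finset.mem_image] at hv
      obtain ⟨x, hx, rfl⟩ := hv
      obtain ⟨w', k, hk, rfl, hk2, hk3⟩ := hgood x hx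
      refine ⟨w', k, hmemFp _ _ _ hx, k + 1, by omega, Or.inr rfl, ?_⟩
      show Sum.inr (Sum.inr (w', (⟨(k + 1) % ℓ, _⟩ : Fin ℓ))) = node A w' (k+1) _
      simp only [node, Sum.inr.injEq, Prod.mk.injEq, Fin.mk.injEq]
      exact ⟨trivial, Nat.mod_eq_of_lt (by omega)⟩
  have hSnode : ∀ (w' : B) (tt : ℕ) (htt : tt < ℓ),
      node A w' tt htt ∈ S ↔ ((w', tt) ∈ Fp ∨ (1 ≤ tt ∧ (w', tt - 1) ∈ Fp)) := by
    intro w' tt htt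
    constructor
    · intro h
      obtain ⟨w'', k, hkF, tt', htt', hc, heq⟩ := hSmem _ h
      obtain ⟨hw, htteq⟩ := node_inj heq
      subst hw
      rcases hc with rfl | rfl
      · left; rw [htteq]; exact hkF
      · right; constructor
        · omega
        · have : tt - 1 = k := by omega
          rw [this]; exact hkF
    · intro h
      rcases h with h | ⟨h1, h⟩
      · obtain ⟨hk, hF, _, _⟩ := hFpmem _ _ h
        rw [hS, Finset.mem_union]
        exact Or.inl hF
      · obtain ⟨hk, hF, hk2, hk3⟩ := hFpmem _ _ h
        rw [hS, Finset.mem_union]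
        right
        rw [Finset.mem_image]
        refine ⟨node A w' (tt-1) hk, hF, ?_⟩
        show Sum.inr (Sum.inr (w', (⟨(tt - 1 + 1) % ℓ, _⟩ : Fin ℓ))) = node A w' tt htt
        simp only [node, Sum.inr.injEq, Prod.mk.injEq, Fin.mk.injEq]
        refine ⟨trivial, ?_⟩
        rw [Nat.mod_eq_of_lt (by omega)]
        omega
  have hAnotS : ∀ a : A, Sum.inl a ∉ S := by
    intro a h
    obtain ⟨_, _, _, _, _, _, heq⟩ := hSmem _ h
    simp [node] at heq
  have hBnotS : ∀ w' : B, Sum.inr (Sum.inl w') ∉ S := by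
    intro w' h
    obtain ⟨_, _, _, _, _, _, heq⟩ := hSmem _ h
    simp [node] at heq
  have hcardS : S.card ≤ 2 * b := by
    calc S.card ≤ F.card + (F.image gshift).card := Finset.card_union_le _ _
      _ ≤ F.card + F.card := by
          have := Finset.card_image_le (s := F) (f := gshift); omega
      _ = 2 * b := by omega
  -- defended positions
  have hp0D : ∀ t i, p0 i ∈ FF.posDef p t := by
    intro t i
    rw [FF.posDef, Finset.mem_biUnion]
    exact ⟨0, by simp, by simp [hp]⟩
  have hp1D : ∀ t, 1 ≤ t → ∀ i, p1 i ∈ FF.posDef p t := by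
    intro t ht i
    rw [FF.posDef, Finset.mem_biUnion]
    refine ⟨1, by simp; omega, ?_⟩
    simp [hp]
  -- positions never in S
  have hp0S : ∀ i, p0 i ∉ S := by
    intro i h
    rw [hp0, hSnode] at h
    have hji := h2 i
    rcases h with h | ⟨h1, h⟩
    · have := hsepFp _ _ _ h (hfireFp i) (by omega)
      omega
    · have heq : j i - 1 - 1 = j i - 2 := by omega
      rw [heq] at h
      have := hsepFp _ _ _ h (hfireFp i) (by omega)
      omega
  have hp1S : ∀ i, p1 i ∉ S := by
    intro i h
    obtain ⟨q, hqF, htq⟩ := tgt_fire (hfireFp i)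
    rw [hp1, hSnode] at h
    rw [htq] at h
    rcases h with h | ⟨h1, h⟩
    · have := hsepFp _ _ _ hqF h (by omega)
      omega
    · have heq : q + 2 - 1 = q + 1 := by omega
      rw [heq] at h
      have := hsepFp _ _ _ hqF h (by omega)
      omega
  -- coverage of blocks
  have hcov0 : ∀ (w' : B) (k : ℕ) (hk1 : k - 1 < ℓ), (w', k) ∈ Fp →
      ∃ i, p0 i = node A w' (k - 1) hk1 := by
    intro w' k hk1 hkF
    obtain ⟨hk, hF, _, _⟩ := hFpmem _ _ hkF
    obtain ⟨i, hi⟩ := hfire_surj _ hF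
    have := hnode i
    rw [hi] at this
    obtain ⟨rfl, rfl⟩ := node_inj this.symm
    exact ⟨i, node_congr _ _ rfl⟩
  have hcov1 : ∀ (w' : B) (k : ℕ) (hk2 : k + 2 < ℓ), (w', k) ∈ Fp →
      ∃ i, p1 i = node A w' (k + 2) hk2 := by
    intro w' k hk2 hkF
    obtain ⟨j', hj'F, htj'⟩ := tgt_cover Fp w' k hkF
    obtain ⟨hj'lt, hj'Fm, _, _⟩ := hFpmem _ _ hj'F
    obtain ⟨i, hi⟩ := hfire_surj _ hj'Fm
    have := hnode i
    rw [hi] at this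
    obtain ⟨rfl, rfl⟩ := node_inj this.symm
    refine ⟨i, ?_⟩
    rw [hp1]
    exact node_congr _ _ htj'
  -- the burnt set stays inside S
  have hFS : F ⊆ S := Finset.subset_union_left
  have hburnt : ∀ t, FF.pburnt G F p t ⊆ S := by
    intro t
    induction t with
    | zero => exact hFS
    | succ t ih =>
      intro v hv
      rw [show FF.pburnt G F p (t+1) = FF.spread G (FF.posDef p t) (FF.pburnt G F p t) from rfl,
        FF.spread, Finset.mem_union] at hv
      rcases hv with hv | hv
      · exact ih hv
      · rw [Finset.mem_filter] at hv
        obtain ⟨-, hnD, u, hu, hadj⟩ := hv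
        have huS := ih hu
        obtain ⟨w', k, hkF, tt, htt, hcase, rfl⟩ := hSmem _ huS
        have hkb := hFpbound _ _ hkF
        by_cases huF : (w', tt) ∈ Fp
        · have hb2 := hFpbound _ _ huF
          rcases adj_interior GA GB f (by omega) (by omega) htt
            (show tt - 1 < ℓ by omega) (show tt + 1 < ℓ by omega) hadj with rfl | rfl
          · obtain ⟨i, hpi⟩ := hcov0 w' tt _ huF
            exact absurd (hpi ▸ hp0D t i) hnD
          · rw [hSnode]
            right
            refine ⟨by omega, ?_⟩
            have : tt + 1 - 1 = tt := by omega
            rw [this]; exact huF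
        · have htteq : tt = k + 1 := by
            rcases hcase with rfl | rfl
            · exact absurd hkF huF
            · rfl
          subst htteq
          have htpos : 1 ≤ t := by
            rcases Nat.eq_zero_or_pos t with rfl | hpos
            · exact absurd (hmemFp _ _ htt hu) huF
            · exact hpos
          rcases adj_interior GA GB f (show 1 ≤ k + 1 by omega) (show k + 1 + 2 ≤ ℓ by omega) htt
            (show k + 1 - 1 < ℓ by omega) (show k + 1 + 1 < ℓ by omega) hadj with rfl | rfl
          · rw [hSnode]
            left
            have : k + 1 - 1 = k := by omega
            rw [this]; exact hkF
          · obtain ⟨i, hpi⟩ := hcov1 w' k (show k + 2 < ℓ by omega) hkF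
            exact absurd (hpi ▸ hp1D t htpos i) hnD
  -- helpers for showing walk supports avoid S
  have hstar : ∀ (tt : ℕ) (htt : tt < ℓ), node A wstar tt htt ∉ S := by
    intro tt htt h
    rw [hSnode] at h
    rcases h with h | ⟨_, h⟩
    · exact hwstar _ h
    · exact hwstar _ h
  -- validity of the strategy
  have hvalid : FF.ValidPR G F p := by
    constructor
    · intro t i hc
      have hcS := hburnt t hc
      by_cases ht : t = 0
      · subst ht
        exact hp0S i (by simpa [hp] using hcS)
      · exact hp1S i (by simpa [hp, ht] using hcS)
    · intro t i
      by_cases ht : t = 0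
      · subst ht
        have hpe0 : p 0 i = p0 i := by simp [hp]
        have hpe1 : p 1 i = p1 i := by simp [hp]
        have h2i := h2 i
        have h3i := h3 i
        by_cases hne : (belows Fp (w i) (j i)).Nonempty
        · -- walk down the path to block the fire below
          obtain ⟨q, hqF, hqlt, htq, hmax⟩ := tgt_specA hne
          have hqb := hFpbound _ _ hqF
          have hsep4 : q + 4 ≤ j i := hsepFp _ _ _ hqF (hfireFp i) hqlt
          obtain ⟨P, hP⟩ := walk_desc' GA GB f (w i) (j i - 1) (q + 2) (by omega) (hjm i)
            (by omega)
          refine ⟨P.copy (by rw [hpe0]) (by rw [hpe1, hp1]; exact node_congr _ _ htq.symm), ?_⟩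
          intro v hv
          rw [SimpleGraph.Walk.support_copy] at hv
          obtain ⟨tt, htt, htt1, htt2, rfl⟩ := hP v hv
          intro hvb
          have hvS := hburnt 1 hvb
          rw [hSnode] at hvS
          rcases hvS with hvS | ⟨hg1, hvS⟩
          · have := hmax tt hvS (by omega)
            omega
          · have := hmax (tt - 1) hvS (by omega)
            omega
        · -- the long walk around, to block the topmost fire from above
          have hmin : ∀ kk, (w i, kk) ∈ Fp → j i ≤ kk := by
            intro kk hkk
            by_contra hcon
            exact hne ⟨kk, mem_belows.mpr ⟨hkk, by omega⟩⟩
          obtain ⟨q, hqF, hqge, htq, hmax⟩ := tgt_specB (hfireFp i) hne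
          have hqb := hFpbound _ _ hqF
          have hlow : ∀ (tt : ℕ) (htt : tt < ℓ), tt + 1 ≤ j i → node A (w i) tt htt ∉ S := by
            intro tt htt hle h
            rw [hSnode] at h
            rcases h with h | ⟨_, h⟩
            · have := hmin tt h; omega
            · have := hmin (tt - 1) h; omega
          have hhigh : ∀ (tt : ℕ) (htt : tt < ℓ), q + 2 ≤ tt → node A (w i) tt htt ∉ S := by
            intro tt htt hle h
            rw [hSnode] at h
            rcases h with h | ⟨_, h⟩
            · have := hmax tt h; omega
            · have := hmax (tt - 1) h; omega
          obtain ⟨W1, hW1⟩ := walk_desc' GA GB f (w i) (j i - 1) 0 (by omega) (hjm i) (by omega)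
          have eA : G.Adj (node A (w i) 0 (by omega)) (Sum.inl (f (w i))) :=
            (adj_A0 GA GB f (w i) (by omega)).symm
          set WA0 := (hGA.preconnected (f (w i)) (f wstar)).some with hWA0
          set WA := WA0.map (⟨Sum.inl, fun h => Or.inl h⟩ : GA →g G) with hWAdef
          have eA2 : G.Adj (Sum.inl (f wstar)) (node A wstar 0 (by omega)) :=
            adj_A0 GA GB f wstar (by omega)
          obtain ⟨W2r, hW2r⟩ := walk_desc' (ℓ := ℓ) GA GB f wstar (ℓ - 1) 0 (by omega) (by omega)
            (by omega)
          set W2 := W2r.reverse with hW2def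
          have eB : G.Adj (node A wstar (ℓ-1) (by omega)) (Sum.inr (Sum.inl wstar)) :=
            (adj_Btop GA GB f wstar (by omega)).symm
          set WB0 := (hGB.preconnected wstar (w i)).some with hWB0
          set WB := WB0.map (⟨fun x => Sum.inr (Sum.inl x), fun h => Or.inl h⟩ : GB →g G)
            with hWBdef
          have eB2 : G.Adj (Sum.inr (Sum.inl (w i))) (node A (w i) (ℓ-1) (by omega)) :=
            adj_Btop GA GB f (w i) (by omega)
          obtain ⟨W3, hW3⟩ := walk_desc' (ℓ := ℓ) GA GB f (w i) (ℓ-1) (q+2) (by omega) (by omega)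
            (by omega)
          refine ⟨(W1.append (SimpleGraph.Walk.cons eA (WA.append (SimpleGraph.Walk.cons eA2
            (W2.append (SimpleGraph.Walk.cons eB (WB.append (SimpleGraph.Walk.cons eB2
            W3)))))))).copy (by rw [hpe0]) (by rw [hpe1, hp1]; exact node_congr _ _ htq.symm),
            ?_⟩
          intro v hv
          rw [SimpleGraph.Walk.support_copy] at hv
          intro hvb
          have hvS := hburnt 1 hvb
          simp only [SimpleGraph.Walk.mem_support_append_iff, SimpleGraph.Walk.support_cons,
            List.mem_cons] at hv
          rcases hv with hv | hv | hv
          · obtain ⟨tt, htt, _, htt2, rfl⟩ := hW1 v hv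
            exact hlow tt htt (by omega) hvS
          · subst hv
            exact hlow 0 (by omega) (by omega) hvS
          rcases hv with hv | hv | hv
          · rw [hWAdef, SimpleGraph.Walk.support_map, List.mem_map] at hv
            obtain ⟨a, _, rfl⟩ := hv
            exact hAnotS _ hvS
          · subst hv
            exact hAnotS _ hvS
          rcases hv with hv | hv | hv
          · rw [hW2def, SimpleGraph.Walk.support_reverse, List.mem_reverse] at hv
            obtain ⟨tt, htt, _, _, rfl⟩ := hW2r v hv
            exact hstar tt htt hvS
          · subst hv
            exact hstar (ℓ-1) (by omega) hvS
          rcases hv with hv | hv | hv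
          · rw [hWBdef, SimpleGraph.Walk.support_map, List.mem_map] at hv
            obtain ⟨x, _, rfl⟩ := hv
            exact hBnotS _ hvS
          · subst hv
            exact hBnotS _ hvS
          obtain ⟨tt, htt, htt1, _, rfl⟩ := hW3 v hv
          exact hhigh tt htt (by omega) hvS
      · -- from time 1 on, stand still
        have hpe : p1 i = p t i := by simp [hp, ht]
        have hpe' : p1 i = p (t+1) i := by simp [hp]
        refine ⟨SimpleGraph.Walk.nil.copy hpe hpe', ?_⟩
        intro v hv
        rw [SimpleGraph.Walk.support_copy, SimpleGraph.Walk.support_nil,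
          List.mem_singleton] at hv
        subst hv
        intro hvb
        exact hp1S i (hburnt _ hvb)
  -- conclusion
  have hfb : (FF.pburnt G F p (Fintype.card (A ⊕ B ⊕ (B × Fin ℓ)))).card ≤ 2 * b :=
    le_trans (Finset.card_le_card (hburnt _)) hcardS
  have hmem : Fintype.card (A ⊕ B ⊕ (B × Fin ℓ)) -
      (FF.pburnt G F p (Fintype.card (A ⊕ B ⊕ (B × Fin ℓ)))).card ∈
      {k | ∃ p' : ℕ → Fin b → (A ⊕ B ⊕ (B × Fin ℓ)), FF.ValidPR G F p' ∧
        k = Fintype.card (A ⊕ B ⊕ (B × Fin ℓ)) -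
          (FF.pburnt G F p' (Fintype.card (A ⊕ B ⊕ (B × Fin ℓ)))).card} :=
    ⟨p, hvalid, rfl⟩
  have hbdd : BddAbove {k | ∃ p' : ℕ → Fin b → (A ⊕ B ⊕ (B × Fin ℓ)), FF.ValidPR G F p' ∧
      k = Fintype.card (A ⊕ B ⊕ (B × Fin ℓ)) -
        (FF.pburnt G F p' (Fintype.card (A ⊕ B ⊕ (B × Fin ℓ)))).card} := by
    refine ⟨Fintype.card (A ⊕ B ⊕ (B × Fin ℓ)), ?_⟩
    rintro k ⟨p', _, rfl⟩
    exact Nat.sub_le _ _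
  have hle := le_csSup hbdd hmem
  rw [FF.PRMVS]
  omega

end Strategy


theorem stmt11 {A B : Type*} [Fintype A] [DecidableEq A] [Fintype B] [DecidableEq B]
    (b : ℕ) (hb : 1 ≤ b)
    (GA : SimpleGraph A) (hGA : GA.Connected)
    (GB : SimpleGraph B) (hGB : GB.Connected)
    (hcB : Fintype.card B = b + 1) (hcA : b + 1 ≤ Fintype.card A)
    (f : B → A) (hf : Function.Injective f) :
    ∃ C : ℕ, ∀ ℓ : ℕ, 1 ≤ ℓ →
      ∑ F ∈ (Finset.univ : Finset (A ⊕ B ⊕ (B × Fin ℓ))).powersetCard b,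
        (Fintype.card (A ⊕ B ⊕ (B × Fin ℓ)) - FF.PRMVS (Gconn GA GB f ℓ) F b)
      ≤ C * ℓ ^ b := by
  classical
  haveI : Nonempty B := Fintype.card_pos_iff.mp (by omega)
  refine ⟨(2*b + (Fintype.card A + (b+1) + (b+1)*5) + 3) * (Fintype.card A + 2*(b+1)) ^ b, ?_⟩
  intro ℓ hℓ
  set K := Fintype.card A + 2*(b+1) with hK
  set c0 := Fintype.card A + (b+1) + (b+1)*5 with hc0
  set n := Fintype.card (A ⊕ B ⊕ (B × Fin ℓ)) with hn
  have hncard : n = Fintype.card A + ((b+1) + (b+1)*ℓ) := by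
    rw [hn, Fintype.card_sum, Fintype.card_sum, Fintype.card_prod, Fintype.card_fin, hcB]
  have hn1 : 1 ≤ n := by rw [hncard]; omega
  have hnK : n ≤ K * ℓ := by
    have key : K * ℓ = Fintype.card A * ℓ + ((b+1)*ℓ + (b+1)*ℓ) := by rw [hK]; ring
    have h1 : Fintype.card A ≤ Fintype.card A * ℓ := Nat.le_mul_of_pos_right _ (by omega)
    have h2 : b+1 ≤ (b+1)*ℓ := Nat.le_mul_of_pos_right _ (by omega)
    rw [hncard, key]
    omega
  set P := (Finset.univ : Finset (A ⊕ B ⊕ (B × Fin ℓ))).powersetCard b with hP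
  have hPF : ∀ F ∈ P, F.card = b := fun F hF => (Finset.mem_powersetCard.mp hF).2
  set GoodF : Finset (A ⊕ B ⊕ (B × Fin ℓ)) → Prop := fun F =>
    (∀ x ∈ F, ∃ (w : B) (j : ℕ) (hj : j < ℓ), x = node A w j hj ∧ 2 ≤ j ∧ j + 3 ≤ ℓ) ∧
    (∀ (w : B) (j j' : ℕ) (hj : j < ℓ) (hj' : j' < ℓ),
      node A w j hj ∈ F → node A w j' hj' ∈ F → j < j' → j + 4 ≤ j') with hGoodF
  have hgoodbound : ∀ F ∈ P, GoodF F → n - FF.PRMVS (Gconn GA GB f ℓ) F b ≤ 2*b := by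
    intro F hF hg
    have := good_strategy GA GB f hGA hGB hb hℓ (by omega) F (hPF F hF) hg.1 hg.2
    omega
  -- the two kinds of bad vertices/pairs
  set NI : Finset (A ⊕ B ⊕ (B × Fin ℓ)) := Finset.univ.filter
    (fun x => ∀ (w : B) (j : ℕ) (hj : j < ℓ), x = node A w j hj → 2 ≤ j → ℓ < j + 3)
    with hNI
  set CL : Finset ((A ⊕ B ⊕ (B × Fin ℓ)) × (A ⊕ B ⊕ (B × Fin ℓ))) := Finset.univ.filter
    (fun q => ∃ (w : B) (jj jj' : ℕ) (hj : jj < ℓ) (hj' : jj' < ℓ),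
      q.1 = node A w jj hj ∧ q.2 = node A w jj' hj' ∧ jj < jj' ∧ jj' < jj + 4) with hCL
  have hsplit : P.filter (fun F => ¬ GoodF F) ⊆
      (NI.biUnion (fun v => P.filter (fun F => v ∈ F))) ∪
      (CL.biUnion (fun q => P.filter (fun F => q.1 ∈ F ∧ q.2 ∈ F))) := by
    intro F hF
    rw [Finset.mem_filter] at hF
    obtain ⟨hFP, hbad⟩ := hF
    rw [hGoodF] at hbad
    rw [Finset.mem_union]
    rcases not_and_or.mp hbad with h | h
    · push_neg at h
      obtain ⟨x, hxF, hx⟩ := h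
      left
      rw [Finset.mem_biUnion]
      exact ⟨x, by rw [hNI, Finset.mem_filter]; exact ⟨Finset.mem_univ _, hx⟩,
        by rw [Finset.mem_filter]; exact ⟨hFP, hxF⟩⟩
    · push_neg at h
      obtain ⟨w, jj, jj', hj, hj', hm, hm', hlt, hlt4⟩ := h
      right
      rw [Finset.mem_biUnion]
      refine ⟨(node A w jj hj, node A w jj' hj'), ?_, ?_⟩
      · rw [hCL, Finset.mem_filter]
        exact ⟨Finset.mem_univ _, w, jj, jj', hj, hj', rfl, rfl, hlt, by omega⟩
      · rw [Finset.mem_filter]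
        exact ⟨hFP, hm, hm'⟩
  have hfix1 : ∀ v, (P.filter (fun F => v ∈ F)).card ≤ n ^ (b-1) := by
    intro v
    have hle : (P.filter (fun F => v ∈ F)).card ≤
        ((Finset.univ : Finset (A ⊕ B ⊕ (B × Fin ℓ))).powersetCard (b-1)).card := by
      apply Finset.card_le_card_of_injOn (fun F => F.erase v)
      · intro F hF
        rw [Finset.mem_coe, Finset.mem_filter] at hF
        rw [Finset.mem_coe, Finset.mem_powersetCard]
        exact ⟨Finset.subset_univ _, by rw [Finset.card_erase_of_mem hF.2, hPF F hF.1]⟩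
      · intro F hF F' hF' he
        rw [Finset.mem_coe, Finset.mem_filter] at hF hF'
        rw [← Finset.insert_erase hF.2, ← Finset.insert_erase hF'.2]
        exact congrArg _ he
    rw [Finset.card_powersetCard, Finset.card_univ, ← hn] at hle
    exact le_trans hle (Nat.choose_le_pow _ _)
  have hfix2 : ∀ q : (A ⊕ B ⊕ (B × Fin ℓ)) × (A ⊕ B ⊕ (B × Fin ℓ)), q.1 ≠ q.2 →
      (P.filter (fun F => q.1 ∈ F ∧ q.2 ∈ F)).card ≤ if 2 ≤ b then n ^ (b-2) else 0 := by
    intro q hne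
    by_cases h2b : 2 ≤ b
    · rw [if_pos h2b]
      have hle : (P.filter (fun F => q.1 ∈ F ∧ q.2 ∈ F)).card ≤
          ((Finset.univ : Finset (A ⊕ B ⊕ (B × Fin ℓ))).powersetCard (b-2)).card := by
        apply Finset.card_le_card_of_injOn (fun F => (F.erase q.1).erase q.2)
        · intro F hF
          rw [Finset.mem_coe, Finset.mem_filter] at hF
          rw [Finset.mem_coe, Finset.mem_powersetCard]
          refine ⟨Finset.subset_univ _, ?_⟩
          rw [Finset.card_erase_of_mem (Finset.mem_erase.mpr ⟨(Ne.symm hne), hF.2.2⟩),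
            Finset.card_erase_of_mem hF.2.1, hPF F hF.1]
          omega
        · intro F hF F' hF' he
          rw [Finset.mem_coe, Finset.mem_filter] at hF hF'
          have h1 : insert q.2 ((F.erase q.1).erase q.2) = F.erase q.1 :=
            Finset.insert_erase (Finset.mem_erase.mpr ⟨Ne.symm hne, hF.2.2⟩)
          have h1' : insert q.2 ((F'.erase q.1).erase q.2) = F'.erase q.1 :=
            Finset.insert_erase (Finset.mem_erase.mpr ⟨Ne.symm hne, hF'.2.2⟩)
          have he' : (F.erase q.1).erase q.2 = (F'.erase q.1).erase q.2 := he
          rw [← Finset.insert_erase hF.2.1, ← Finset.insert_erase hF'.2.1, ← h1, ← h1', he']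
      rw [Finset.card_powersetCard, Finset.card_univ, ← hn] at hle
      exact le_trans hle (Nat.choose_le_pow _ _)
    · rw [if_neg h2b]
      rw [Nat.le_zero, Finset.card_eq_zero, Finset.filter_eq_empty_iff]
      intro F hF hq
      have hsub : ({q.1, q.2} : Finset _) ⊆ F := by
        intro x hx
        rcases Finset.mem_insert.mp hx with rfl | hx
        · exact hq.1
        · rw [Finset.mem_singleton] at hx; subst hx; exact hq.2
      have := Finset.card_le_card hsub
      rw [Finset.card_pair hne, hPF F hF] at this
      omega
  have hNIcard : NI.card ≤ c0 := by
    set pd : B × Fin ℓ → Prop := fun y => ((y.2 : ℕ) < 2 ∨ ℓ < (y.2 : ℕ) + 3) with hpd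
    set T1 : Finset (A ⊕ B ⊕ (B × Fin ℓ)) := (Finset.univ : Finset A).image Sum.inl with hT1
    set T2 : Finset (A ⊕ B ⊕ (B × Fin ℓ)) :=
      (Finset.univ : Finset B).image (fun x => Sum.inr (Sum.inl x)) with hT2
    set T3 : Finset (A ⊕ B ⊕ (B × Fin ℓ)) :=
      ((Finset.univ : Finset (B × Fin ℓ)).filter pd).image (fun y => Sum.inr (Sum.inr y))
      with hT3
    have hsub : NI ⊆ T1 ∪ (T2 ∪ T3) := by
      intro x hx
      rw [hNI, Finset.mem_filter] at hx
      obtain ⟨-, hx⟩ := hx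
      rcases x with a | ww | y
      · exact Finset.mem_union_left _ (Finset.mem_image_of_mem _ (Finset.mem_univ _))
      · exact Finset.mem_union_right _
          (Finset.mem_union_left _ (Finset.mem_image_of_mem _ (Finset.mem_univ _)))
      · refine Finset.mem_union_right _ (Finset.mem_union_right _ ?_)
        apply Finset.mem_image_of_mem
        rw [Finset.mem_filter]
        refine ⟨Finset.mem_univ _, ?_⟩
        have hy := hx y.1 (y.2 : ℕ) y.2.isLt rfl
        rw [hpd]
        rcases Nat.lt_or_ge (y.2 : ℕ) 2 with hc | hc
        · exact Or.inl hc
        · exact Or.inr (hy hc)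
    have hJ : ((Finset.univ : Finset (Fin ℓ)).filter
        (fun jf : Fin ℓ => ((jf : ℕ) < 2 ∨ ℓ < (jf : ℕ) + 3))).card ≤ 5 := by
      have hJ1 : ((Finset.univ : Finset (Fin ℓ)).filter
          (fun jf : Fin ℓ => ((jf : ℕ) < 2 ∨ ℓ < (jf : ℕ) + 3))).card ≤
          ({0, 1, ℓ-3, ℓ-2, ℓ-1} : Finset ℕ).card := by
        apply Finset.card_le_card_of_injOn (fun jf : Fin ℓ => (jf : ℕ))
        · intro jf hjf
          rw [Finset.mem_coe, Finset.mem_filter] at hjf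
          have := jf.isLt
          simp only [Finset.mem_coe, Finset.mem_insert, Finset.mem_singleton]
          omega
        · intro x _ y _ hxy
          exact Fin.ext hxy
      refine le_trans hJ1 ?_
      refine le_trans (Finset.card_insert_le _ _) (Nat.succ_le_succ ?_)
      refine le_trans (Finset.card_insert_le _ _) (Nat.succ_le_succ ?_)
      refine le_trans (Finset.card_insert_le _ _) (Nat.succ_le_succ ?_)
      refine le_trans (Finset.card_insert_le _ _) (Nat.succ_le_succ ?_)
      exact le_of_eq (Finset.card_singleton _)
    have h3 : T3.card ≤ Fintype.card B * 5 := by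
      rw [hT3]
      refine le_trans Finset.card_image_le ?_
      have hsub2 : ((Finset.univ : Finset (B × Fin ℓ)).filter pd) ⊆
          (Finset.univ : Finset B) ×ˢ ((Finset.univ : Finset (Fin ℓ)).filter
            (fun jf : Fin ℓ => ((jf : ℕ) < 2 ∨ ℓ < (jf : ℕ) + 3))) := by
        intro y hy
        rw [Finset.mem_filter, hpd] at hy
        rw [Finset.mem_product, Finset.mem_filter]
        exact ⟨Finset.mem_univ _, Finset.mem_univ _, hy.2⟩
      refine le_trans (Finset.card_le_card hsub2) ?_
      rw [Finset.card_product, Finset.card_univ]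
      exact Nat.mul_le_mul_left _ hJ
    have h1 : T1.card ≤ Fintype.card A := by
      rw [hT1]
      refine le_trans Finset.card_image_le ?_
      rw [Finset.card_univ]
    have h2 : T2.card ≤ Fintype.card B := by
      rw [hT2]
      refine le_trans Finset.card_image_le ?_
      rw [Finset.card_univ]
    have hfin : NI.card ≤ T1.card + (T2.card + T3.card) := by
      refine le_trans (Finset.card_le_card hsub) ?_
      refine le_trans (Finset.card_union_le _ _) ?_
      exact Nat.add_le_add_left (Finset.card_union_le _ _) _
    rw [hc0]
    rw [hcB] at h2 h3
    omega
  have hCLcard : CL.card ≤ 3 * n := by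
    set jval : (A ⊕ B ⊕ (B × Fin ℓ)) → ℕ := fun v => match v with
      | Sum.inr (Sum.inr y) => (y.2 : ℕ)
      | _ => 0 with hjval
    have hle : CL.card ≤ ((Finset.univ : Finset (A ⊕ B ⊕ (B × Fin ℓ))) ×ˢ
        ({1, 2, 3} : Finset ℕ)).card := by
      apply Finset.card_le_card_of_injOn (fun q => (q.1, jval q.2 - jval q.1))
      · intro q hq
        rw [Finset.mem_coe, hCL, Finset.mem_filter] at hq
        obtain ⟨-, w, jj, jj', hj, hj', h1, h2, hlt, hlt4⟩ := hq
        rw [Finset.mem_coe, Finset.mem_product]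
        refine ⟨Finset.mem_univ _, ?_⟩
        have hv1 : jval q.1 = jj := by rw [h1]; rfl
        have hv2 : jval q.2 = jj' := by rw [h2]; rfl
        beta_reduce
        rw [hv1, hv2]
        simp only [Finset.mem_insert, Finset.mem_singleton]
        omega
      · intro q hq q' hq' he
        rw [Finset.mem_coe, hCL, Finset.mem_filter] at hq hq'
        obtain ⟨-, w, jj, jj', hj, hj', h1, h2, hlt, hlt4⟩ := hq
        obtain ⟨-, w2, kk, kk', hk, hk', g1, g2, glt, glt4⟩ := hq'
        rw [Prod.mk.injEq] at he
        obtain ⟨hfst, hsnd⟩ := he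
        have hv1 : jval q.1 = jj := by rw [h1]; rfl
        have hv2 : jval q.2 = jj' := by rw [h2]; rfl
        have hw1 : jval q'.1 = kk := by rw [g1]; rfl
        have hw2 : jval q'.2 = kk' := by rw [g2]; rfl
        have heq1 : node A w jj hj = node A w2 kk hk := by rw [← h1, ← g1, hfst]
        obtain ⟨rfl, rfl⟩ := node_inj heq1
        have : jj' = kk' := by
          rw [hv1, hv2, hw1, hw2] at hsnd
          omega
        subst this
        refine Prod.ext (by rw [h1, g1]) ?_
        rw [h2, g2]
    refine le_trans hle ?_
    rw [Finset.card_product, Finset.card_univ, ← hn]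
    have : ({1, 2, 3} : Finset ℕ).card ≤ 3 := by decide
    calc n * ({1, 2, 3} : Finset ℕ).card ≤ n * 3 := Nat.mul_le_mul_left _ this
      _ = 3 * n := by ring
  -- assemble
  have hsum : ∑ F ∈ P, (n - FF.PRMVS (Gconn GA GB f ℓ) F b) ≤
      2*b * P.card + n * (P.filter (fun F => ¬ GoodF F)).card := by
    calc ∑ F ∈ P, (n - FF.PRMVS (Gconn GA GB f ℓ) F b)
        ≤ ∑ F ∈ P, (if GoodF F then 2*b else n) := by
          refine Finset.sum_le_sum ?_
          intro F hF
          by_cases h : GoodF F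
          · rw [if_pos h]; exact hgoodbound F hF h
          · rw [if_neg h]; exact Nat.sub_le _ _
      _ = (P.filter GoodF).card * (2*b) + (P.filter (fun F => ¬ GoodF F)).card * n := by
          rw [Finset.sum_ite, Finset.sum_const, Finset.sum_const, smul_eq_mul, smul_eq_mul]
      _ ≤ 2*b * P.card + n * (P.filter (fun F => ¬ GoodF F)).card := by
          have := Finset.card_filter_le P GoodF
          have h2 : (P.filter GoodF).card * (2*b) ≤ 2*b * P.card := by
            rw [mul_comm]; exact Nat.mul_le_mul_left _ this
          have h3 : (P.filter (fun F => ¬ GoodF F)).card * n =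
            n * (P.filter (fun F => ¬ GoodF F)).card := mul_comm _ _
          omega
  have hbadcard : (P.filter (fun F => ¬ GoodF F)).card ≤
      c0 * n^(b-1) + 3 * n * (if 2 ≤ b then n^(b-2) else 0) := by
    refine le_trans (Finset.card_le_card hsplit) ?_
    refine le_trans (Finset.card_union_le _ _) ?_
    have hA : (NI.biUnion (fun v => P.filter (fun F => v ∈ F))).card ≤ c0 * n^(b-1) := by
      refine le_trans (Finset.card_biUnion_le) ?_
      calc ∑ v ∈ NI, (P.filter (fun F => v ∈ F)).card ≤ ∑ _v ∈ NI, n^(b-1) :=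
            Finset.sum_le_sum (fun v _ => hfix1 v)
        _ = NI.card * n^(b-1) := by rw [Finset.sum_const, smul_eq_mul]
        _ ≤ c0 * n^(b-1) := Nat.mul_le_mul_right _ hNIcard
    have hBc : (CL.biUnion (fun q => P.filter (fun F => q.1 ∈ F ∧ q.2 ∈ F))).card ≤
        3 * n * (if 2 ≤ b then n^(b-2) else 0) := by
      refine le_trans (Finset.card_biUnion_le) ?_
      have hq : ∀ q ∈ CL, (P.filter (fun F => q.1 ∈ F ∧ q.2 ∈ F)).card ≤
          (if 2 ≤ b then n^(b-2) else 0) := by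
        intro q hq
        rw [hCL, Finset.mem_filter] at hq
        obtain ⟨-, w, jj, jj', hj, hj', h1, h2, hlt, -⟩ := hq
        refine hfix2 q ?_
        rw [h1, h2]
        intro hcon
        have := (node_inj hcon).2
        omega
      calc ∑ q ∈ CL, (P.filter (fun F => q.1 ∈ F ∧ q.2 ∈ F)).card
          ≤ ∑ _q ∈ CL, (if 2 ≤ b then n^(b-2) else 0) := Finset.sum_le_sum hq
        _ = CL.card * (if 2 ≤ b then n^(b-2) else 0) := by
            rw [Finset.sum_const, smul_eq_mul]
        _ ≤ 3 * n * (if 2 ≤ b then n^(b-2) else 0) := Nat.mul_le_mul_right _ hCLcard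
    omega
  have hPcard : P.card ≤ n^b := by
    rw [hP, Finset.card_powersetCard, Finset.card_univ, ← hn]
    exact Nat.choose_le_pow _ _
  have hpow1 : n * n^(b-1) = n^b := by
    rw [← pow_succ']
    congr 1
    omega
  have hpow2 : n * (3 * n * (if 2 ≤ b then n^(b-2) else 0)) ≤ 3 * n^b := by
    by_cases h2b : 2 ≤ b
    · rw [if_pos h2b]
      have : n * (3 * n * n^(b-2)) = 3 * (n * (n * n^(b-2))) := by ring
      rw [this, ← pow_succ', ← pow_succ']
      have hb2 : b - 2 + 1 + 1 = b := by omega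
      rw [hb2]
    · rw [if_neg h2b]
      simp
  have htotal : ∑ F ∈ P, (n - FF.PRMVS (Gconn GA GB f ℓ) F b) ≤ (2*b + c0 + 3) * n^b := by
    have step : n * (P.filter (fun F => ¬ GoodF F)).card ≤ c0 * n^b + 3 * n^b := by
      have h1 : n * (P.filter (fun F => ¬ GoodF F)).card ≤
          n * (c0 * n^(b-1) + 3 * n * (if 2 ≤ b then n^(b-2) else 0)) :=
        Nat.mul_le_mul_left _ hbadcard
      have h2 : n * (c0 * n^(b-1) + 3 * n * (if 2 ≤ b then n^(b-2) else 0)) =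
          c0 * (n * n^(b-1)) + n * (3 * n * (if 2 ≤ b then n^(b-2) else 0)) := by ring
      rw [h2, hpow1] at h1
      omega
    have h3 : 2*b * P.card ≤ 2*b * n^b := Nat.mul_le_mul_left _ hPcard
    have h4 : (2*b + c0 + 3) * n^b = 2*b * n^b + (c0 * n^b + 3 * n^b) := by ring
    omega
  refine le_trans htotal ?_
  have hKpow : n^b ≤ K^b * ℓ^b := by
    calc n^b ≤ (K * ℓ)^b := Nat.pow_le_pow_left hnK b
      _ = K^b * ℓ^b := mul_pow _ _ _
  calc (2*b + c0 + 3) * n^b ≤ (2*b + c0 + 3) * (K^b * ℓ^b) :=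
        Nat.mul_le_mul_left _ hKpow
    _ = (2*b + c0 + 3) * K^b * ℓ^b := by ring
end
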